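/- For every integer k ≥ 3, no vertex guard set of the office-like polygon P_k that contains a guard at a vertex shared by a corridor and one of the rooms R_2, …, R_{k−1} achieves a dispersion distance of 4k + 1; consequently, every vertex guard set of P_k attaining the maximum dispersion distance has cardinality at least 2k − 2. -/

import Mathlib

open Set
open scoped ENNReal

noncomputable section

/-- The plane, equipped with the `L¹` metric. -/
abbrev Plane : Type := WithLp 1 (ℝ × ℝ)

namespace DispersiveAGP

noncomputable instance : DecidableEq Plane := Classical.decEq _

/-- The `x`-coordinate of a point of the plane. -/
def px (p : Plane) : ℝ := (WithLp.equiv 1 (ℝ × ℝ) p).1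

/-- The `y`-coordinate of a point of the plane. -/
def py (p : Plane) : ℝ := (WithLp.equiv 1 (ℝ × ℝ) p).2

/-- The point of the plane with the given coordinates. -/
def pt (a b : ℝ) : Plane := (WithLp.equiv 1 (ℝ × ℝ)).symm (a, b)

/-- Data of an axis-parallel rectangle. -/
structure Rect where
  x1 : ℝ
  x2 : ℝ
  y1 : ℝ
  y2 : ℝ

noncomputable instance : DecidableEq Rect := Classical.decEq _

/-- The closed rectangle, as a set of points of the plane. -/
def Rect.toSet (R : Rect) : Set Plane :=
  {p | R.x1 ≤ px p ∧ px p ≤ R.x2 ∧ R.y1 ≤ py p ∧ py p ≤ R.y2}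

/-- The open rectangle. -/
def Rect.interiorSet (R : Rect) : Set Plane :=
  {p | R.x1 < px p ∧ px p < R.x2 ∧ R.y1 < py p ∧ py p < R.y2}

/-- The rectangle is nondegenerate. -/
def Rect.Nondegenerate (R : Rect) : Prop := R.x1 < R.x2 ∧ R.y1 < R.y2

/-- `p` and `q` r-see each other within the region `S`: the closed axis-parallel
rectangle with opposite corners `p` and `q` is contained in `S`. -/
def RSee (S : Set Plane) (p q : Plane) : Prop :=
  {r : Plane | min (px p) (px q) ≤ px r ∧ px r ≤ max (px p) (px q) ∧
      min (py p) (py q) ≤ py r ∧ py r ≤ max (py p) (py q)} ⊆ S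

/-- A vertex of (the boundary of) the region `S`: a boundary point such that in no
neighborhood of it is the boundary contained in a single line. -/
def IsVertex (S : Set Plane) (v : Plane) : Prop :=
  v ∈ frontier S ∧
    ∀ ε > (0 : ℝ), ¬ ∃ a b c : ℝ, (a ≠ 0 ∨ b ≠ 0) ∧
      ∀ q ∈ frontier S ∩ Metric.ball v ε, a * px q + b * py q = c

/-- A vertex guard set of the region `S`, under r-visibility. -/
def IsGuardSet (S : Set Plane) (G : Finset Plane) : Prop :=
  (∀ g ∈ G, IsVertex S g) ∧ ∀ p ∈ S, ∃ g ∈ G, RSee S g p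

/-- Geodesic `L¹`-distance within `S`: the infimum of `L¹`-lengths (total variations
with respect to the `L¹` metric) of paths from `p` to `q` that stay inside `S`. -/
def geodesic (S : Set Plane) (p q : Plane) : ℝ≥0∞ :=
  ⨅ (γ : Path p q) (_ : Set.range (fun t => γ t) ⊆ S),
    eVariationOn (fun t => γ t) Set.univ

/-- The dispersion distance of a guard set `G` within region `S`: the minimum geodesic
`L¹`-distance between two distinct guards. -/
def dispersion (S : Set Plane) (G : Finset Plane) : ℝ≥0∞ :=
  ⨅ (g ∈ G) (g' ∈ G) (_ : g ≠ g'), geodesic S g g'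

/-- The guard set `G` has dispersion distance at least `ℓ`. -/
def DispersionAtLeast (S : Set Plane) (G : Finset Plane) (ℓ : ℝ≥0∞) : Prop :=
  ∀ g ∈ G, ∀ g' ∈ G, g ≠ g' → ℓ ≤ geodesic S g g'

/-- `G` is a vertex guard set attaining the maximum possible dispersion distance. -/
def AttainsMaxDispersion (S : Set Plane) (G : Finset Plane) : Prop :=
  IsGuardSet S G ∧ ∀ G' : Finset Plane, IsGuardSet S G' → dispersion S G' ≤ dispersion S G

/-- The horizontal corridor `C` connects the room `R1` (on its left) with the room `R2`
(on its right): the two vertical sides of `C` are strictly contained in the relative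
interiors of the corresponding vertical edges of `R1` resp. `R2`. -/
def ConnectsH (C R1 R2 : Rect) : Prop :=
  R1.x2 = C.x1 ∧ C.x2 = R2.x1 ∧
  R1.y1 < C.y1 ∧ C.y2 < R1.y2 ∧ R2.y1 < C.y1 ∧ C.y2 < R2.y2

/-- The vertical corridor `C` connects the room `R1` (below) with the room `R2` (above). -/
def ConnectsV (C R1 R2 : Rect) : Prop :=
  R1.y2 = C.y1 ∧ C.y2 = R2.y1 ∧
  R1.x1 < C.x1 ∧ C.x2 < R1.x2 ∧ R2.x1 < C.x1 ∧ C.x2 < R2.x2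

/-- The corridor `C` connects the rooms `R1` and `R2`. -/
def Connects (C R1 R2 : Rect) : Prop := ConnectsH C R1 R2 ∨ ConnectsV C R1 R2

/-- An office-like polygon: a connected union of rectangular rooms linked by
rectangular corridors, each corridor connecting exactly two rooms and being strictly
narrower than both of them. -/
structure OfficePolygon where
  rooms : Finset Rect
  corridors : Finset Rect
  rooms_nonempty : rooms.Nonempty
  nondeg_rooms : ∀ R ∈ rooms, R.Nondegenerate
  nondeg_corridors : ∀ C ∈ corridors, C.Nondegenerate
  connects : ∀ C ∈ corridors, ∃ R1 ∈ rooms, ∃ R2 ∈ rooms, R1 ≠ R2 ∧ Connects C R1 R2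
  corridor_room_disjoint : ∀ C ∈ corridors, ∀ R ∈ rooms, C.interiorSet ∩ R.toSet = ∅
  rooms_disjoint : ∀ R1 ∈ rooms, ∀ R2 ∈ rooms, R1 ≠ R2 → R1.interiorSet ∩ R2.interiorSet = ∅
  corridors_disjoint : ∀ C1 ∈ corridors, ∀ C2 ∈ corridors, C1 ≠ C2 →
    C1.interiorSet ∩ C2.interiorSet = ∅
  connected : IsConnected ((⋃ R ∈ rooms, R.toSet) ∪ (⋃ C ∈ corridors, C.toSet))

/-- The polygonal region covered by an office-like polygon. -/
def OfficePolygon.region (P : OfficePolygon) : Set Plane :=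
  (⋃ R ∈ P.rooms, R.toSet) ∪ (⋃ C ∈ P.corridors, C.toSet)

/-- All vertices of the region lie on integer coordinates. -/
def HasIntegerVertices (S : Set Plane) : Prop :=
  ∀ v, IsVertex S v → ∃ a b : ℤ, v = pt a b

/-- Any two distinct vertices are at geodesic `L¹`-distance at least `1`. -/
def VertexSeparated (S : Set Plane) : Prop :=
  ∀ v w, IsVertex S v → IsVertex S w → v ≠ w → 1 ≤ geodesic S v w

/-- The corridors `C1` and `C2` are independent within `S`: no guard placed at a vertex
of one of them r-sees all of the other. -/
def IndependentCorridors (S : Set Plane) (C1 C2 : Rect) : Prop :=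
  (∀ v, IsVertex S v → v ∈ C1.toSet → ∃ q ∈ C2.toSet, ¬ RSee S v q) ∧
  (∀ v, IsVertex S v → v ∈ C2.toSet → ∃ q ∈ C1.toSet, ¬ RSee S v q)

/-- An office-like polygon is independent if all pairs of distinct corridors are
independent. -/
def OfficePolygon.Independent (P : OfficePolygon) : Prop :=
  ∀ C1 ∈ P.corridors, ∀ C2 ∈ P.corridors, C1 ≠ C2 → IndependentCorridors P.region C1 C2


/-- The size of the `g`-th vertical gap (counted from the bottom, `1 ≤ g ≤ k - 1`)
between consecutive rooms of the polygon `P_k`: the lowest and the highest gaps have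
size `2`, all others have size `1`. -/
def gapSize (k g : ℕ) : ℝ := if g = 1 ∨ g = k - 1 then 2 else 1

/-- The `y`-coordinate of the bottom edge of the room that is `j`-th from the bottom
(`0 ≤ j ≤ k - 1`) in the polygon `P_k`. -/
def roomBottomFromBottom (k j : ℕ) : ℝ :=
  (j : ℝ) + ∑ g ∈ Finset.Icc 1 j, gapSize k g

/-- The `y`-coordinate of the bottom edge of the room `R_i` of `P_k`
(rooms are numbered `1, …, k` from top to bottom). -/
def roomYBottom (k i : ℕ) : ℝ := roomBottomFromBottom k (k - i)

/-- The room `R_i` of `P_k`: height `1`, width `2k² + 4k + 1`, left boundary on the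
line `x = 0`. -/
def roomRect (k i : ℕ) : Rect where
  x1 := 0
  x2 := 2 * (k : ℝ) ^ 2 + 4 * k + 1
  y1 := roomYBottom k i
  y2 := roomYBottom k i + 1

/-- The corridor of `P_k` between the consecutive rooms `R_i` and `R_{i+1}`
(`1 ≤ i ≤ k - 1`) in the `j`-th vertical strip (`1 ≤ j ≤ k`): it has width `1`, its
left boundary lies on the line `x = 1 + (j - 1)(2k + 2)`, and its height fills the gap
between the two rooms. -/
def corridorPk (k i j : ℕ) : Rect where
  x1 := 1 + ((j : ℝ) - 1) * (2 * k + 2)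
  x2 := 2 + ((j : ℝ) - 1) * (2 * k + 2)
  y1 := roomYBottom k (i + 1) + 1
  y2 := roomYBottom k i

/-- The region covered by the office-like polygon `P_k`. -/
def PkRegion (k : ℕ) : Set Plane :=
  (⋃ i ∈ Finset.Icc 1 k, (roomRect k i).toSet) ∪
  (⋃ i ∈ Finset.Icc 1 (k - 1), ⋃ j ∈ Finset.Icc 1 k, (corridorPk k i j).toSet)

/-- The `j`-th vertical strip `S_j` of `P_k`: the part of `P_k` contained in the
vertical slab over the `x`-extent of the corridors with left boundary on the line
`x = 1 + (j - 1)(2k + 2)`, i.e. all these corridors together with the portions of the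
rooms in that column. -/
def stripSet (k j : ℕ) : Set Plane :=
  PkRegion k ∩
    {p | 1 + ((j : ℝ) - 1) * (2 * k + 2) ≤ px p ∧
         px p ≤ 2 + ((j : ℝ) - 1) * (2 * k + 2)}

section Infra
@[simp] lemma px_pt (a b : ℝ) : px (pt a b) = a := rfl
@[simp] lemma py_pt (a b : ℝ) : py (pt a b) = b := rfl
@[simp] lemma pt_coords (p : Plane) : pt (px p) (py p) = p := rfl
lemma plane_ext {p q : Plane} (hx : px p = px q) (hy : py p = py q) : p = q := by
  rw [← pt_coords p, ← pt_coords q, hx, hy]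

lemma dist_eq (p q : Plane) : dist p q = |px p - px q| + |py p - py q| := by
  rw [WithLp.prod_dist_eq_add (by norm_num)]
  simp [Real.dist_eq, px, py]

lemma edist_eq (p q : Plane) : edist p q = ENNReal.ofReal (|px p - px q| + |py p - py q|) := by
  rw [edist_dist, dist_eq]

lemma lipschitz_px : LipschitzWith 1 px := by
  intro p q
  rw [edist_eq, edist_dist, Real.dist_eq]
  simp only [ENNReal.coe_one, one_mul]
  exact ENNReal.ofReal_le_ofReal (le_add_of_nonneg_right (abs_nonneg _))

lemma lipschitz_py : LipschitzWith 1 py := by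
  intro p q
  rw [edist_eq, edist_dist, Real.dist_eq]
  simp only [ENNReal.coe_one, one_mul]
  exact ENNReal.ofReal_le_ofReal (le_add_of_nonneg_left (abs_nonneg _))

lemma continuous_px : Continuous px := lipschitz_px.continuous
lemma continuous_py : Continuous py := lipschitz_py.continuous

/-- master upper bound for eVariationOn via a monotone length function -/
lemma eVariationOn_univ_le {f : unitInterval → Plane} (φ : unitInterval → ℝ) (hφ : Monotone φ)
    (h : ∀ s t : unitInterval, s ≤ t → edist (f s) (f t) ≤ ENNReal.ofReal (φ t - φ s)) :
    eVariationOn f univ ≤ ENNReal.ofReal (φ 1 - φ 0) := by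
  apply iSup_le
  rintro ⟨n, ⟨u, hu, -⟩⟩
  calc ∑ i ∈ Finset.range n, edist (f (u (i+1))) (f (u i))
      ≤ ∑ i ∈ Finset.range n, ENNReal.ofReal (φ (u (i+1)) - φ (u i)) := by
        refine Finset.sum_le_sum fun i _ => ?_
        rw [edist_comm]; exact h _ _ (hu (Nat.le_succ i))
    _ = ENNReal.ofReal (∑ i ∈ Finset.range n, (φ (u (i+1)) - φ (u i))) := by
        rw [ENNReal.ofReal_sum_of_nonneg]
        intro i _; exact sub_nonneg.2 (hφ (hu (Nat.le_succ i)))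
    _ = ENNReal.ofReal (φ (u n) - φ (u 0)) := by
        congr 1
        exact Finset.sum_range_sub (fun i => φ (u i)) n
    _ ≤ _ := by
        refine ENNReal.ofReal_le_ofReal ?_
        have h1 : φ (u n) ≤ φ 1 := hφ (unitInterval.le_one _)
        have h2 : φ 0 ≤ φ (u 0) := hφ (unitInterval.nonneg _)
        linarith

lemma edist_le_geodesic (S : Set Plane) (p q : Plane) : edist p q ≤ geodesic S p q := by
  refine le_iInf fun γ => le_iInf fun _ => ?_
  have := eVariationOn.edist_le (fun t => γ t) (mem_univ (0:unitInterval)) (mem_univ 1)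
  simpa using this

/-- crossing lower bound -/
lemma crossing_le_geodesic (S : Set Plane) (p q : Plane) (T : Set Plane) (c : ℝ≥0∞)
    (hcross : ∀ γ : Path p q, Set.range (fun t => γ t) ⊆ S → ∃ t : unitInterval, γ t ∈ T)
    (hc : ∀ m ∈ T, c ≤ edist p m + edist m q) : c ≤ geodesic S p q := by
  refine le_iInf fun γ => le_iInf fun hγ => ?_
  obtain ⟨t, ht⟩ := hcross γ hγ
  set u : ℕ → unitInterval := fun n => if n = 0 then 0 else if n = 1 then t else 1 with hu
  have hval : ∀ n, n ≠ 0 → n ≠ 1 → u n = 1 := by intro n h0 h1; simp [hu, h0, h1]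
  have humono : Monotone u := by
    intro a b hab
    rcases Nat.eq_zero_or_pos a with rfl | ha
    · simp only [hu]; simpa using unitInterval.nonneg' 
    rcases Nat.eq_zero_or_pos (a-1) with ha1 | ha2
    · have ha' : a = 1 := by omega
      subst ha'
      rcases Nat.eq_or_lt_of_le hab with rfl | hb
      · exact le_rfl
      · rw [hval b (by omega) (by omega)]
        simp only [hu]; simpa using unitInterval.le_one'
    · rw [hval a (by omega) (by omega), hval b (by omega) (by omega)]
  have key := eVariationOn.sum_le (f := fun t => γ t) (n := 2) humono (fun i => mem_univ _)
  have hsum : ∑ i ∈ Finset.range 2, edist (γ (u (i+1))) (γ (u i))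
      = edist (γ t) p + edist q (γ t) := by
    rw [Finset.sum_range_succ, Finset.sum_range_one]
    simp [hu]
  calc c ≤ edist p (γ t) + edist (γ t) q := hc _ ht
    _ = ∑ i ∈ Finset.range 2, edist (γ (u (i+1))) (γ (u i)) := by
        rw [hsum, edist_comm p, edist_comm q]
    _ ≤ _ := key

@[simp] lemma px_add (p q : Plane) : px (p + q) = px p + px q := rfl
@[simp] lemma py_add (p q : Plane) : py (p + q) = py p + py q := rfl
@[simp] lemma px_smul (c : ℝ) (p : Plane) : px (c • p) = c * px p := rfl
@[simp] lemma py_smul (c : ℝ) (p : Plane) : py (c • p) = c * py p := rfl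

lemma between_of_convex {a b c : ℝ} (h0 : 0 ≤ c) (h1 : c ≤ 1) :
    min a b ≤ a + c * (b - a) ∧ a + c * (b - a) ≤ max a b := by
  rcases le_total a b with h | h
  · rw [min_eq_left h, max_eq_right h]
    constructor <;> nlinarith
  · rw [min_eq_right h, max_eq_left h]
    constructor <;> nlinarith

/-- The L-shaped path from `p` to `q`: first horizontal, then vertical. -/
def lPath (p q : Plane) : Path p q where
  toFun t := p + (min (2*(t:ℝ)) 1) • (pt (px q - px p) 0) + (max (2*(t:ℝ)-1) 0) • (pt 0 (py q - py p))
  continuous_toFun := by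
    apply Continuous.add
    apply Continuous.add continuous_const
    · exact (((continuous_const.mul continuous_subtype_val).min continuous_const)).smul continuous_const
    · exact (((continuous_const.mul continuous_subtype_val).sub continuous_const).max continuous_const).smul continuous_const
  source' := by
    apply plane_ext <;> simp
  target' := by
    apply plane_ext <;> (simp; try ring)

lemma lPath_px (p q : Plane) (t : unitInterval) :
    px (lPath p q t) = px p + (min (2*(t:ℝ)) 1) * (px q - px p) := by
  simp [lPath]

lemma lPath_py (p q : Plane) (t : unitInterval) :
    py (lPath p q t) = py p + (max (2*(t:ℝ)-1) 0) * (py q - py p) := by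
  simp [lPath]

lemma geodesic_le_lpath (S : Set Plane) (p q : Plane)
    (hH : ∀ r : Plane, py r = py p → min (px p) (px q) ≤ px r → px r ≤ max (px p) (px q) → r ∈ S)
    (hV : ∀ r : Plane, px r = px q → min (py p) (py q) ≤ py r → py r ≤ max (py p) (py q) → r ∈ S) :
    geodesic S p q ≤ edist p q := by
  refine iInf_le_of_le (lPath p q) (iInf_le_of_le ?_ ?_)
  · rintro _ ⟨t, rfl⟩
    have ht0 : (0:ℝ) ≤ t := t.2.1
    have ht1 : (t:ℝ) ≤ 1 := t.2.2
    rcases le_total (t:ℝ) (1/2) with h | h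
    · have hd : max (2*(t:ℝ)-1) 0 = 0 := max_eq_right (by linarith)
      have hc0 : (0:ℝ) ≤ min (2*(t:ℝ)) 1 := le_min (by linarith) one_pos.le
      have hc1 : min (2*(t:ℝ)) 1 ≤ 1 := min_le_right _ _
      have := between_of_convex (a := px p) (b := px q) hc0 hc1
      exact hH _ (by rw [lPath_py, hd]; ring) (by rw [lPath_px]; exact this.1)
        (by rw [lPath_px]; exact this.2)
    · have hc : min (2*(t:ℝ)) 1 = 1 := min_eq_right (by linarith)
      have hd0 : (0:ℝ) ≤ max (2*(t:ℝ)-1) 0 := le_max_right _ _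
      have hd1 : max (2*(t:ℝ)-1) 0 ≤ 1 := max_le (by linarith) one_pos.le
      have := between_of_convex (a := py p) (b := py q) hd0 hd1
      exact hV _ (by rw [lPath_px, hc]; ring) (by rw [lPath_py]; exact this.1)
        (by rw [lPath_py]; exact this.2)
  · have hb := eVariationOn_univ_le (f := fun t => lPath p q t)
      (φ := fun t => (min (2*(t:ℝ)) 1) * |px q - px p| + (max (2*(t:ℝ)-1) 0) * |py q - py p|)
      ?_ ?_
    · refine le_trans hb (le_of_eq ?_)
      rw [edist_eq]
      congr 1
      have : (2:ℝ) * (1:unitInterval) = 2 := by norm_num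
      rw [abs_sub_comm (px p), abs_sub_comm (py p)]
      norm_num
    · intro s t hst
      have hst' : (s:ℝ) ≤ t := hst
      have h1 : min (2*(s:ℝ)) 1 ≤ min (2*(t:ℝ)) 1 := by
        apply min_le_min _ le_rfl; linarith
      have h2 : max (2*(s:ℝ)-1) 0 ≤ max (2*(t:ℝ)-1) 0 := by
        apply max_le_max _ le_rfl; linarith
      exact add_le_add (mul_le_mul_of_nonneg_right h1 (abs_nonneg _))
        (mul_le_mul_of_nonneg_right h2 (abs_nonneg _))
    · intro s t hst
      have hst' : (s:ℝ) ≤ t := hst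
      have h1 : min (2*(s:ℝ)) 1 ≤ min (2*(t:ℝ)) 1 := by
        apply min_le_min _ le_rfl; linarith
      have h2 : max (2*(s:ℝ)-1) 0 ≤ max (2*(t:ℝ)-1) 0 := by
        apply max_le_max _ le_rfl; linarith
      rw [edist_eq]
      apply ENNReal.ofReal_le_ofReal
      rw [lPath_px, lPath_px, lPath_py, lPath_py]
      have e1 : |px p + min (2*(s:ℝ)) 1 * (px q - px p) - (px p + min (2*(t:ℝ)) 1 * (px q - px p))|
          = (min (2*(t:ℝ)) 1 - min (2*(s:ℝ)) 1) * |px q - px p| := by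
        rw [show px p + min (2*(s:ℝ)) 1 * (px q - px p) - (px p + min (2*(t:ℝ)) 1 * (px q - px p))
            = -((min (2*(t:ℝ)) 1 - min (2*(s:ℝ)) 1) * (px q - px p)) by ring, abs_neg, abs_mul,
          abs_of_nonneg (by linarith)]
      have e2 : |py p + max (2*(s:ℝ)-1) 0 * (py q - py p) - (py p + max (2*(t:ℝ)-1) 0 * (py q - py p))|
          = (max (2*(t:ℝ)-1) 0 - max (2*(s:ℝ)-1) 0) * |py q - py p| := by
        rw [show py p + max (2*(s:ℝ)-1) 0 * (py q - py p) - (py p + max (2*(t:ℝ)-1) 0 * (py q - py p))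
            = -((max (2*(t:ℝ)-1) 0 - max (2*(s:ℝ)-1) 0) * (py q - py p)) by ring, abs_neg, abs_mul,
          abs_of_nonneg (by linarith)]
      rw [e1, e2]; ring_nf; exact le_rfl


end Infra

section Arith
variable {k : ℕ}

lemma gapSize_ge (g : ℕ) : 1 ≤ gapSize k g := by
  unfold gapSize; split <;> norm_num

lemma gapSize_le (g : ℕ) : gapSize k g ≤ 2 := by
  unfold gapSize; split <;> norm_num

lemma rbb_zero : roomBottomFromBottom k 0 = 0 := by
  simp [roomBottomFromBottom]

lemma rbb_succ (j : ℕ) : roomBottomFromBottom k (j+1)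
    = roomBottomFromBottom k j + 1 + gapSize k (j+1) := by
  unfold roomBottomFromBottom
  rw [show Finset.Icc 1 (j+1) = insert (j+1) (Finset.Icc 1 j) by
    rw [Finset.insert_Icc_right_eq_Icc_add_one (by omega)]]
  rw [Finset.sum_insert (by simp)]
  push_cast; ring

lemma rbb_step (j : ℕ) : roomBottomFromBottom k j + 2 ≤ roomBottomFromBottom k (j+1)
    ∧ roomBottomFromBottom k (j+1) ≤ roomBottomFromBottom k j + 3 := by
  have h1 := gapSize_ge (k := k) (j+1)
  have h2 := gapSize_le (k := k) (j+1)
  rw [rbb_succ]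
  constructor <;> linarith

lemma rbb_nonneg (j : ℕ) : 0 ≤ roomBottomFromBottom k j := by
  induction j with
  | zero => rw [rbb_zero]
  | succ n ih => have := (rbb_step (k := k) n).1; linarith

lemma rbb_mono {j j' : ℕ} (h : j ≤ j') :
    roomBottomFromBottom k j ≤ roomBottomFromBottom k j' := by
  induction j' with
  | zero => simp_all
  | succ n ih =>
    rcases Nat.eq_or_lt_of_le h with heq | hlt
    · rw [heq]
    · have := (rbb_step (k := k) n).1
      have := ih (by omega)
      linarith

lemma rbb_mono_strict {j j' : ℕ} (h : j < j') :
    roomBottomFromBottom k j + 2 ≤ roomBottomFromBottom k j' := by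
  have h1 := (rbb_step (k := k) j).1
  have h2 := rbb_mono (k := k) (show j+1 ≤ j' by omega)
  linarith

lemma rbb_val (hk : 3 ≤ k) : ∀ j, 1 ≤ j → j + 2 ≤ k → roomBottomFromBottom k j = 2*(j:ℝ)+1 := by
  intro j
  induction j with
  | zero => omega
  | succ n ih =>
    intro _ hn2
    rcases Nat.eq_zero_or_pos n with rfl | hn
    · rw [rbb_succ, rbb_zero]
      have h1 : gapSize k 1 = 2 := by unfold gapSize; simp
      rw [h1]; norm_num
    · have hne1 : n + 1 ≠ 1 := by omega
      have hne2 : n + 1 ≠ k - 1 := by omega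
      rw [rbb_succ, ih hn (by omega)]
      unfold gapSize
      rw [if_neg (by tauto)]
      push_cast; ring

lemma rbb_top (hk : 3 ≤ k) : roomBottomFromBottom k (k-1) = 2*(k:ℝ) := by
  have h : k - 1 = (k-2) + 1 := by omega
  rw [h, rbb_succ, rbb_val hk (k-2) (by omega) (by omega)]
  have h1 : gapSize k ((k-2)+1) = 2 := by
    unfold gapSize
    rw [if_pos (Or.inr (by omega))]
  rw [h1]
  have : ((k-2 : ℕ) : ℝ) = (k:ℝ) - 2 := by
    push_cast [Nat.cast_sub (by omega : 2 ≤ k)]; ring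
  rw [this]; ring

lemma rb_k : roomYBottom k k = 0 := by
  unfold roomYBottom; rw [Nat.sub_self]; exact rbb_zero

lemma rb_one (hk : 3 ≤ k) : roomYBottom k 1 = 2*(k:ℝ) := rbb_top hk

lemma rb_mid (hk : 3 ≤ k) {i : ℕ} (h2 : 2 ≤ i) (hik : i ≤ k-1) :
    roomYBottom k i = 2*((k:ℝ) - i) + 1 := by
  unfold roomYBottom
  rw [rbb_val hk (k-i) (by omega) (by omega)]
  have : ((k-i : ℕ) : ℝ) = (k:ℝ) - i := by
    push_cast [Nat.cast_sub (by omega : i ≤ k)]; ring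
  rw [this]

lemma rb_nonneg {i : ℕ} : 0 ≤ roomYBottom k i := rbb_nonneg _

lemma rb_le_2k (hk : 3 ≤ k) {i : ℕ} (hi : 1 ≤ i) : roomYBottom k i ≤ 2*(k:ℝ) := by
  rw [← rb_one hk]
  exact rbb_mono (by omega)

lemma rb_anti (hk : 3 ≤ k) {i i' : ℕ} (h : i < i') (hi' : i' ≤ k) :
    roomYBottom k i' + 2 ≤ roomYBottom k i := by
  unfold roomYBottom
  exact rbb_mono_strict (by omega)

lemma rb_gap (hk : 3 ≤ k) {i : ℕ} (hi : 1 ≤ i) (hik : i + 1 ≤ k) :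
    roomYBottom k (i+1) + 2 ≤ roomYBottom k i ∧ roomYBottom k i ≤ roomYBottom k (i+1) + 3 := by
  unfold roomYBottom
  have h : k - i = (k - (i+1)) + 1 := by omega
  rw [h]
  exact rbb_step _

end Arith

section Region
variable {k : ℕ}

lemma rect_isClosed (R : Rect) : IsClosed R.toSet := by
  have : R.toSet = px ⁻¹' (Set.Ici R.x1) ∩ px ⁻¹' (Set.Iic R.x2)
      ∩ (py ⁻¹' (Set.Ici R.y1) ∩ py ⁻¹' (Set.Iic R.y2)) := by
    ext q; simp [Rect.toSet]; tauto
  rw [this]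
  exact (((isClosed_Ici.preimage continuous_px).inter
    (isClosed_Iic.preimage continuous_px)).inter
    ((isClosed_Ici.preimage continuous_py).inter (isClosed_Iic.preimage continuous_py)))

lemma rect_isOpen_interior (R : Rect) : IsOpen R.interiorSet := by
  have : R.interiorSet = px ⁻¹' (Set.Ioi R.x1) ∩ px ⁻¹' (Set.Iio R.x2)
      ∩ (py ⁻¹' (Set.Ioi R.y1) ∩ py ⁻¹' (Set.Iio R.y2)) := by
    ext q; simp [Rect.interiorSet]; tauto
  rw [this]
  exact (((isOpen_Ioi.preimage continuous_px).inter
    (isOpen_Iio.preimage continuous_px)).inter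
    ((isOpen_Ioi.preimage continuous_py).inter (isOpen_Iio.preimage continuous_py)))

lemma rect_interior_sub (R : Rect) : R.interiorSet ⊆ R.toSet := by
  intro q hq
  exact ⟨hq.1.le, hq.2.1.le, hq.2.2.1.le, hq.2.2.2.le⟩

lemma region_isClosed : IsClosed (PkRegion k) := by
  unfold PkRegion
  apply IsClosed.union
  · exact Set.Finite.isClosed_biUnion (Finset.finite_toSet _) fun i _ => rect_isClosed _
  · exact Set.Finite.isClosed_biUnion (Finset.finite_toSet _) fun i _ =>
      Set.Finite.isClosed_biUnion (Finset.finite_toSet _) fun j _ => rect_isClosed _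

lemma mem_region_iff {p : Plane} : p ∈ PkRegion k ↔
    (∃ i, (1 ≤ i ∧ i ≤ k) ∧ (0 ≤ px p ∧ px p ≤ 2*(k:ℝ)^2+4*(k:ℝ)+1 ∧
      roomYBottom k i ≤ py p ∧ py p ≤ roomYBottom k i + 1)) ∨
    (∃ i, (1 ≤ i ∧ i ≤ k-1) ∧ ∃ j, (1 ≤ j ∧ j ≤ k) ∧
      (1+((j:ℝ)-1)*(2*(k:ℝ)+2) ≤ px p ∧ px p ≤ 2+((j:ℝ)-1)*(2*(k:ℝ)+2) ∧
      roomYBottom k (i+1) + 1 ≤ py p ∧ py p ≤ roomYBottom k i)) := by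
  simp only [PkRegion, Set.mem_union, Set.mem_iUnion, Finset.mem_Icc, Rect.toSet,
    roomRect, corridorPk, Set.mem_setOf_eq, exists_prop]

lemma col_ge {j : ℕ} (h1 : 1 ≤ j) : (1:ℝ) ≤ 1+((j:ℝ)-1)*(2*(k:ℝ)+2) := by
  have : (1:ℝ) ≤ (j:ℝ) := by exact_mod_cast h1
  nlinarith [Nat.cast_nonneg (α := ℝ) k]

lemma col_le (hk : 3 ≤ k) {j : ℕ} (hjk : j ≤ k) :
    2+((j:ℝ)-1)*(2*(k:ℝ)+2) ≤ 2*(k:ℝ)^2 := by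
  have h1 : (j:ℝ) ≤ (k:ℝ) := by exact_mod_cast hjk
  have h2 : (3:ℝ) ≤ (k:ℝ) := by exact_mod_cast hk
  nlinarith

lemma col_close_eq (hk : 3 ≤ k) {m j : ℕ} {x x' : ℝ} (hm1 : 1 ≤ m) (hmk : m ≤ k)
    (hj1 : 1 ≤ j) (hjk : j ≤ k)
    (hxm : 1+((m:ℝ)-1)*(2*(k:ℝ)+2) ≤ x) (hxm2 : x ≤ 2+((m:ℝ)-1)*(2*(k:ℝ)+2))
    (hxj : 1+((j:ℝ)-1)*(2*(k:ℝ)+2) ≤ x') (hxj2 : x' ≤ 2+((j:ℝ)-1)*(2*(k:ℝ)+2))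
    (hclose : |x - x'| < 2*(k:ℝ)+1) : m = j := by
  have h2 : (3:ℝ) ≤ (k:ℝ) := by exact_mod_cast hk
  have habs1 : x - x' < 2*(k:ℝ)+1 := lt_of_le_of_lt (le_abs_self _) hclose
  have habs2 : x' - x < 2*(k:ℝ)+1 := by
    rw [abs_sub_comm] at hclose
    exact lt_of_le_of_lt (le_abs_self _) hclose
  by_contra hne
  rcases Nat.lt_or_ge m j with h | h
  · have : (m:ℝ) + 1 ≤ (j:ℝ) := by exact_mod_cast h
    nlinarith
  · have hj : j < m := by omega
    have : (j:ℝ) + 1 ≤ (m:ℝ) := by exact_mod_cast hj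
    nlinarith

lemma region_bounds (hk : 3 ≤ k) {p : Plane} (hp : p ∈ PkRegion k) :
    0 ≤ px p ∧ px p ≤ 2*(k:ℝ)^2+4*(k:ℝ)+1 ∧ 0 ≤ py p ∧ py p ≤ 2*(k:ℝ)+1 := by
  have hk3 : (3:ℝ) ≤ (k:ℝ) := by exact_mod_cast hk
  rcases mem_region_iff.1 hp with ⟨i, ⟨hi1, hik⟩, hx0, hxW, hy1, hy2⟩ |
    ⟨i, ⟨hi1, hik⟩, j, ⟨hj1, hjk⟩, hx1, hx2, hy1, hy2⟩
  · refine ⟨hx0, hxW, ?_, ?_⟩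
    · linarith [rb_nonneg (k := k) (i := i)]
    · linarith [rb_le_2k hk hi1]
  · have := col_ge (k := k) hj1
    have := col_le hk hjk
    refine ⟨by linarith, by nlinarith, ?_, ?_⟩
    · linarith [rb_nonneg (k := k) (i := i+1)]
    · linarith [rb_le_2k hk (show 1 ≤ i by omega)]

lemma cover (hk : 3 ≤ k) {y : ℝ} (h0 : 0 ≤ y) (h1 : y ≤ 2*(k:ℝ)+1) :
    (∃ m, 1 ≤ m ∧ m ≤ k ∧ roomYBottom k m ≤ y ∧ y ≤ roomYBottom k m + 1) ∨
    (∃ m, 1 ≤ m ∧ m ≤ k-1 ∧ roomYBottom k (m+1) + 1 ≤ y ∧ y ≤ roomYBottom k m) := by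
  have key : ∀ j, j ≤ k-1 → y ≤ roomBottomFromBottom k j + 1 →
      (∃ m, 1 ≤ m ∧ m ≤ k ∧ roomYBottom k m ≤ y ∧ y ≤ roomYBottom k m + 1) ∨
      (∃ m, 1 ≤ m ∧ m ≤ k-1 ∧ roomYBottom k (m+1) + 1 ≤ y ∧ y ≤ roomYBottom k m) := by
    intro j
    induction j with
    | zero =>
      intro _ hy
      rw [rbb_zero] at hy
      left
      exact ⟨k, by omega, by omega, by rw [rb_k]; exact h0, by rw [rb_k]; linarith⟩
    | succ n ih =>
      intro hn hy
      have hrb1 : roomYBottom k (k - (n+1)) = roomBottomFromBottom k (n+1) := by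
        unfold roomYBottom; congr 1; omega
      have hrb0 : roomYBottom k ((k - (n+1)) + 1) = roomBottomFromBottom k n := by
        unfold roomYBottom; congr 1; omega
      rcases le_total y (roomBottomFromBottom k n + 1) with h | h
      · exact ih (by omega) h
      · rcases le_total y (roomBottomFromBottom k (n+1)) with h' | h'
        · right
          refine ⟨k - (n+1), by omega, by omega, ?_, ?_⟩
          · rw [hrb0]; linarith
          · rw [hrb1]; exact h'
        · left
          refine ⟨k - (n+1), by omega, by omega, ?_, ?_⟩
          · rw [hrb1]; linarith
          · rw [hrb1]; linarith
  apply key (k-1) le_rfl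
  rw [rbb_top hk]; linarith

lemma room_sub (hk : 3 ≤ k) {i : ℕ} (hi1 : 1 ≤ i) (hik : i ≤ k) {p : Plane}
    (hx1 : 0 ≤ px p) (hx2 : px p ≤ 2*(k:ℝ)^2+4*(k:ℝ)+1)
    (hy1 : roomYBottom k i ≤ py p) (hy2 : py p ≤ roomYBottom k i + 1) : p ∈ PkRegion k :=
  mem_region_iff.2 (Or.inl ⟨i, ⟨hi1, hik⟩, hx1, hx2, hy1, hy2⟩)

lemma corridor_sub (hk : 3 ≤ k) {i j : ℕ} (hi1 : 1 ≤ i) (hik : i ≤ k-1)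
    (hj1 : 1 ≤ j) (hjk : j ≤ k) {p : Plane}
    (hx1 : 1+((j:ℝ)-1)*(2*(k:ℝ)+2) ≤ px p) (hx2 : px p ≤ 2+((j:ℝ)-1)*(2*(k:ℝ)+2))
    (hy1 : roomYBottom k (i+1) + 1 ≤ py p) (hy2 : py p ≤ roomYBottom k i) : p ∈ PkRegion k :=
  mem_region_iff.2 (Or.inr ⟨i, ⟨hi1, hik⟩, j, ⟨hj1, hjk⟩, hx1, hx2, hy1, hy2⟩)

lemma strip_sub (hk : 3 ≤ k) {j : ℕ} (hj1 : 1 ≤ j) (hjk : j ≤ k) {p : Plane}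
    (hx1 : 1+((j:ℝ)-1)*(2*(k:ℝ)+2) ≤ px p) (hx2 : px p ≤ 2+((j:ℝ)-1)*(2*(k:ℝ)+2))
    (hy1 : 0 ≤ py p) (hy2 : py p ≤ 2*(k:ℝ)+1) : p ∈ PkRegion k := by
  have hk3 : (3:ℝ) ≤ (k:ℝ) := by exact_mod_cast hk
  have hcg := col_ge (k := k) hj1
  have hcl := col_le hk hjk
  rcases cover hk hy1 hy2 with ⟨m, hm1, hmk, ha, hb⟩ | ⟨m, hm1, hmk, ha, hb⟩
  · exact room_sub hk hm1 hmk (by linarith) (by nlinarith) ha hb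
  · exact corridor_sub hk hm1 hmk hj1 hjk hx1 hx2 ha hb

lemma rb_anti_le {i i' : ℕ} (h : i ≤ i') : roomYBottom k i' ≤ roomYBottom k i := by
  unfold roomYBottom
  exact rbb_mono (by omega)

lemma gap_no_room (hk : 3 ≤ k) {i : ℕ} {y : ℝ} (hi1 : 1 ≤ i) (hik : i + 1 ≤ k)
    (h1 : roomYBottom k (i+1) + 1 < y) (h2 : y < roomYBottom k i) :
    ∀ m, 1 ≤ m → m ≤ k → ¬(roomYBottom k m ≤ y ∧ y ≤ roomYBottom k m + 1) := by
  rintro m hm1 hmk ⟨ha, hb⟩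
  rcases le_or_gt m i with h | h
  · have := rb_anti_le (k := k) h
    linarith
  · have := rb_anti_le (k := k) (show i+1 ≤ m by omega)
    linarith

lemma gap_col (hk : 3 ≤ k) {i : ℕ} {p : Plane} (hi1 : 1 ≤ i) (hik : i + 1 ≤ k)
    (hp : p ∈ PkRegion k)
    (h1 : roomYBottom k (i+1) + 1 < py p) (h2 : py p < roomYBottom k i) :
    ∃ j, 1 ≤ j ∧ j ≤ k ∧
      1+((j:ℝ)-1)*(2*(k:ℝ)+2) ≤ px p ∧ px p ≤ 2+((j:ℝ)-1)*(2*(k:ℝ)+2) := by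
  rcases mem_region_iff.1 hp with ⟨m, ⟨hm1, hmk⟩, _, _, hy1, hy2⟩ |
    ⟨m, _, j, ⟨hj1, hjk⟩, hx1, hx2, _, _⟩
  · exact absurd ⟨hy1, hy2⟩ (gap_no_room hk hi1 hik h1 h2 m hm1 hmk)
  · exact ⟨j, hj1, hjk, hx1, hx2⟩

lemma wall_level (hk : 3 ≤ k) {p : Plane} (hp : p ∈ PkRegion k)
    (hx : 2*(k:ℝ)^2 < px p) :
    ∃ m, 1 ≤ m ∧ m ≤ k ∧ roomYBottom k m ≤ py p ∧ py p ≤ roomYBottom k m + 1 := by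
  rcases mem_region_iff.1 hp with ⟨m, ⟨hm1, hmk⟩, _, _, hy1, hy2⟩ |
    ⟨m, _, j, ⟨hj1, hjk⟩, hx1, hx2, _, _⟩
  · exact ⟨m, hm1, hmk, hy1, hy2⟩
  · have := col_le hk hjk
    linarith

end Region

section Vertex
variable {k : ℕ}

lemma frontier_mem_region {v : Plane} (h : v ∈ frontier (PkRegion k)) : v ∈ PkRegion k :=
  (region_isClosed (k := k)).frontier_subset h

lemma interiorSet_sub_interior {R : Rect} (hR : R.toSet ⊆ PkRegion k) :
    R.interiorSet ⊆ interior (PkRegion k) :=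
  ((rect_isOpen_interior R).subset_interior_iff).2 ((rect_interior_sub R).trans hR)

lemma not_vertex_interior {R : Rect} (hR : R.toSet ⊆ PkRegion k) {v : Plane}
    (hv : v ∈ R.interiorSet) : ¬IsVertex (PkRegion k) v := fun h =>
  h.1.2 (interiorSet_sub_interior hR hv)

lemma roomRect_mem {i : ℕ} {p : Plane} : p ∈ (roomRect k i).toSet ↔
    0 ≤ px p ∧ px p ≤ 2*(k:ℝ)^2+4*(k:ℝ)+1 ∧
    roomYBottom k i ≤ py p ∧ py p ≤ roomYBottom k i + 1 := Iff.rfl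

lemma corridorRect_mem {i j : ℕ} {p : Plane} : p ∈ (corridorPk k i j).toSet ↔
    1+((j:ℝ)-1)*(2*(k:ℝ)+2) ≤ px p ∧ px p ≤ 2+((j:ℝ)-1)*(2*(k:ℝ)+2) ∧
    roomYBottom k (i+1) + 1 ≤ py p ∧ py p ≤ roomYBottom k i := Iff.rfl

lemma roomRect_interior_mem {i : ℕ} {p : Plane} : p ∈ (roomRect k i).interiorSet ↔
    0 < px p ∧ px p < 2*(k:ℝ)^2+4*(k:ℝ)+1 ∧
    roomYBottom k i < py p ∧ py p < roomYBottom k i + 1 := Iff.rfl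

lemma corridorRect_interior_mem {i j : ℕ} {p : Plane} : p ∈ (corridorPk k i j).interiorSet ↔
    1+((j:ℝ)-1)*(2*(k:ℝ)+2) < px p ∧ px p < 2+((j:ℝ)-1)*(2*(k:ℝ)+2) ∧
    roomYBottom k (i+1) + 1 < py p ∧ py p < roomYBottom k i := Iff.rfl

lemma roomRect_sub (hk : 3 ≤ k) {i : ℕ} (hi1 : 1 ≤ i) (hik : i ≤ k) :
    (roomRect k i).toSet ⊆ PkRegion k := fun p hp => by
  rw [roomRect_mem] at hp
  exact room_sub hk hi1 hik hp.1 hp.2.1 hp.2.2.1 hp.2.2.2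

lemma corridorRect_sub (hk : 3 ≤ k) {i j : ℕ} (hi1 : 1 ≤ i) (hik : i ≤ k-1)
    (hj1 : 1 ≤ j) (hjk : j ≤ k) : (corridorPk k i j).toSet ⊆ PkRegion k := fun p hp => by
  rw [corridorRect_mem] at hp
  exact corridor_sub hk hi1 hik hj1 hjk hp.1 hp.2.1 hp.2.2.1 hp.2.2.2

lemma not_vertex_line (v : Plane) (a b c : ℝ)
    (hab : a ≠ 0 ∨ b ≠ 0) (ε : ℝ) (hε : 0 < ε)
    (h : ∀ q ∈ PkRegion k, dist q v < ε →
      a * px q + b * py q = c ∨ q ∈ interior (PkRegion k)) :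
    ¬IsVertex (PkRegion k) v := by
  rintro ⟨hv, hflat⟩
  refine hflat ε hε ⟨a, b, c, hab, fun q hq => ?_⟩
  have hqS : q ∈ PkRegion k := frontier_mem_region hq.1
  have hqd : dist q v < ε := by simpa [Metric.mem_ball] using hq.2
  rcases h q hqS hqd with h' | h'
  · exact h'
  · exact absurd h' hq.1.2

lemma dist_coord {q v : Plane} {ε : ℝ} (h : dist q v < ε) :
    (-ε < px q - px v ∧ px q - px v < ε) ∧ (-ε < py q - py v ∧ py q - py v < ε) := by
  rw [dist_eq] at h
  constructor <;> constructor <;>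
    cases abs_lt.1 (show |px q - px v| < ε by linarith [abs_nonneg (py q - py v)]) <;>
    cases abs_lt.1 (show |py q - py v| < ε by linarith [abs_nonneg (px q - px v)]) <;>
    assumption

lemma not_vertex_bottom (hk : 3 ≤ k) {v : Plane} (hy : py v = 0)
    (hx1 : 1 ≤ px v) (hx2 : px v ≤ 2*(k:ℝ)^2) : ¬IsVertex (PkRegion k) v := by
  have hk3 : (3:ℝ) ≤ (k:ℝ) := by exact_mod_cast hk
  apply not_vertex_line v 0 1 0 (Or.inr one_ne_zero) (1/4) (by norm_num)
  intro q hq hd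
  obtain ⟨⟨hdx1, hdx2⟩, ⟨hdy1, hdy2⟩⟩ := dist_coord hd
  have hb := region_bounds hk hq
  rcases eq_or_lt_of_le hb.2.2.1 with heq | hpos
  · left; rw [← heq]; ring
  · right
    apply interiorSet_sub_interior (roomRect_sub hk (by omega) (le_refl k))
    rw [roomRect_interior_mem, rb_k]
    refine ⟨by linarith, by nlinarith, by linarith, by linarith⟩

lemma not_vertex_top (hk : 3 ≤ k) {v : Plane} (hy : py v = 2*(k:ℝ)+1)
    (hx1 : 1 ≤ px v) (hx2 : px v ≤ 2*(k:ℝ)^2) : ¬IsVertex (PkRegion k) v := by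
  have hk3 : (3:ℝ) ≤ (k:ℝ) := by exact_mod_cast hk
  apply not_vertex_line v 0 1 (2*(k:ℝ)+1) (Or.inr one_ne_zero) (1/4) (by norm_num)
  intro q hq hd
  obtain ⟨⟨hdx1, hdx2⟩, ⟨hdy1, hdy2⟩⟩ := dist_coord hd
  have hb := region_bounds hk hq
  rcases eq_or_lt_of_le hb.2.2.2 with heq | hlt
  · left; rw [heq]; ring
  · right
    apply interiorSet_sub_interior (roomRect_sub (i := 1) hk le_rfl (by omega))
    rw [roomRect_interior_mem, rb_one hk]
    refine ⟨by linarith, by nlinarith, by linarith, by linarith⟩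

lemma not_vertex_side (hk : 3 ≤ k) {v : Plane} {i j : ℕ}
    (hi1 : 1 ≤ i) (hik : i + 1 ≤ k) (hj1 : 1 ≤ j) (hjk : j ≤ k)
    (hy1 : roomYBottom k (i+1) + 1 < py v) (hy2 : py v < roomYBottom k i)
    (hx : px v = 1+((j:ℝ)-1)*(2*(k:ℝ)+2) ∨ px v = 2+((j:ℝ)-1)*(2*(k:ℝ)+2)) :
    ¬IsVertex (PkRegion k) v := by
  have hk3 : (3:ℝ) ≤ (k:ℝ) := by exact_mod_cast hk
  set ε : ℝ := min (min (py v - (roomYBottom k (i+1) + 1)) (roomYBottom k i - py v)) (1/4)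
    with hεdef
  have hε : 0 < ε := lt_min (lt_min (by linarith) (by linarith)) (by norm_num)
  apply not_vertex_line v 1 0 (px v) (Or.inl one_ne_zero) ε hε
  intro q hq hd
  obtain ⟨⟨hdx1, hdx2⟩, ⟨hdy1, hdy2⟩⟩ := dist_coord hd
  have hε1 : ε ≤ py v - (roomYBottom k (i+1) + 1) := (min_le_left _ _).trans (min_le_left _ _)
  have hε2 : ε ≤ roomYBottom k i - py v := (min_le_left _ _).trans (min_le_right _ _)
  have hε3 : ε ≤ 1/4 := min_le_right _ _
  have hgy1 : roomYBottom k (i+1) + 1 < py q := by linarith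
  have hgy2 : py q < roomYBottom k i := by linarith
  obtain ⟨m, hm1, hmk, hcm1, hcm2⟩ := gap_col hk hi1 hik hq hgy1 hgy2
  have hxv1 : 1+((j:ℝ)-1)*(2*(k:ℝ)+2) ≤ px v := by rcases hx with h | h <;> rw [h] <;> linarith
  have hxv2 : px v ≤ 2+((j:ℝ)-1)*(2*(k:ℝ)+2) := by rcases hx with h | h <;> rw [h] <;> linarith
  have hmj : m = j := col_close_eq hk hm1 hmk hj1 hjk hcm1 hcm2 hxv1 hxv2
    (by rw [abs_lt]; constructor <;> linarith)
  subst hmj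
  rcases hx with h | h
  · rcases eq_or_lt_of_le hcm1 with heq | hlt
    · left; rw [← heq, h]; ring
    · right
      apply interiorSet_sub_interior (corridorRect_sub hk hi1 (by omega) hj1 hjk)
      rw [corridorRect_interior_mem]
      refine ⟨hlt, by rw [h] at hdx2; linarith, hgy1, hgy2⟩
  · rcases eq_or_lt_of_le hcm2 with heq | hlt
    · left; rw [heq, h]; ring
    · right
      apply interiorSet_sub_interior (corridorRect_sub hk hi1 (by omega) hj1 hjk)
      rw [corridorRect_interior_mem]
      refine ⟨by rw [h] at hdx1; linarith, hlt, hgy1, hgy2⟩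

lemma vertex_strip_y (hk : 3 ≤ k) {j : ℕ} {v : Plane} (hj1 : 1 ≤ j) (hjk : j ≤ k)
    (hv : IsVertex (PkRegion k) v)
    (hx1 : 1+((j:ℝ)-1)*(2*(k:ℝ)+2) ≤ px v) (hx2 : px v ≤ 2+((j:ℝ)-1)*(2*(k:ℝ)+2)) :
    1 ≤ py v ∧ py v ≤ 2*(k:ℝ) := by
  have hk3 : (3:ℝ) ≤ (k:ℝ) := by exact_mod_cast hk
  have hvS : v ∈ PkRegion k := frontier_mem_region hv.1
  have hb := region_bounds hk hvS
  have hcg := col_ge (k := k) hj1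
  have hcl := col_le hk hjk
  constructor
  · by_contra hcon
    push_neg at hcon
    rcases eq_or_lt_of_le hb.2.2.1 with heq | hpos
    · exact not_vertex_bottom hk heq.symm (by linarith) (by linarith) hv
    · refine not_vertex_interior (roomRect_sub hk (by omega) (le_refl k)) ?_ hv
      rw [roomRect_interior_mem, rb_k]
      refine ⟨by linarith, by nlinarith, hpos, by linarith⟩
  · by_contra hcon
    push_neg at hcon
    rcases eq_or_lt_of_le hb.2.2.2 with heq | hlt
    · exact not_vertex_top hk heq (by linarith) (by linarith) hv
    · refine not_vertex_interior (roomRect_sub (i := 1) hk le_rfl (by omega)) ?_ hv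
      rw [roomRect_interior_mem, rb_one hk]
      refine ⟨by linarith, by nlinarith, hcon, hlt⟩

lemma junction_bot (hk : 3 ≤ k) {m j : ℕ} {v : Plane} (hm2 : 2 ≤ m) (hmk : m ≤ k-1)
    (hj1 : 1 ≤ j) (hjk : j ≤ k)
    (hx1 : 1+((j:ℝ)-1)*(2*(k:ℝ)+2) ≤ px v) (hx2 : px v ≤ 2+((j:ℝ)-1)*(2*(k:ℝ)+2))
    (hy : py v = roomYBottom k m) :
    ∃ i, (2 ≤ i ∧ i ≤ k-1) ∧ ∃ i', (1 ≤ i' ∧ i' ≤ k-1) ∧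
      v ∈ (corridorPk k i' j).toSet ∧ v ∈ (roomRect k i).toSet := by
  have hk3 : (3:ℝ) ≤ (k:ℝ) := by exact_mod_cast hk
  have hcg := col_ge (k := k) hj1
  have hcl := col_le hk hjk
  have hgap := rb_gap hk (show 1 ≤ m by omega) (by omega)
  refine ⟨m, ⟨hm2, hmk⟩, m, ⟨by omega, hmk⟩, ?_, ?_⟩
  · rw [corridorRect_mem]
    exact ⟨hx1, hx2, by linarith, by linarith⟩
  · rw [roomRect_mem]
    exact ⟨by linarith, by nlinarith, by linarith, by linarith⟩

lemma junction_top (hk : 3 ≤ k) {m j : ℕ} {v : Plane} (hm2 : 2 ≤ m) (hmk : m ≤ k-1)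
    (hj1 : 1 ≤ j) (hjk : j ≤ k)
    (hx1 : 1+((j:ℝ)-1)*(2*(k:ℝ)+2) ≤ px v) (hx2 : px v ≤ 2+((j:ℝ)-1)*(2*(k:ℝ)+2))
    (hy : py v = roomYBottom k m + 1) :
    ∃ i, (2 ≤ i ∧ i ≤ k-1) ∧ ∃ i', (1 ≤ i' ∧ i' ≤ k-1) ∧
      v ∈ (corridorPk k i' j).toSet ∧ v ∈ (roomRect k i).toSet := by
  have hk3 : (3:ℝ) ≤ (k:ℝ) := by exact_mod_cast hk
  have hcg := col_ge (k := k) hj1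
  have hcl := col_le hk hjk
  have hgap := rb_gap hk (show 1 ≤ m-1 by omega) (show (m-1)+1 ≤ k by omega)
  have hmm : (m-1)+1 = m := by omega
  rw [hmm] at hgap
  refine ⟨m, ⟨hm2, hmk⟩, m-1, ⟨by omega, by omega⟩, ?_, ?_⟩
  · rw [corridorRect_mem, hmm]
    exact ⟨hx1, hx2, by linarith, by linarith⟩
  · rw [roomRect_mem]
    exact ⟨by linarith, by nlinarith, by linarith, by linarith⟩

lemma vertex_strip_mid (hk : 3 ≤ k) {j : ℕ} {v : Plane} (hj1 : 1 ≤ j) (hjk : j ≤ k)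
    (hv : IsVertex (PkRegion k) v)
    (hx1 : 1+((j:ℝ)-1)*(2*(k:ℝ)+2) ≤ px v) (hx2 : px v ≤ 2+((j:ℝ)-1)*(2*(k:ℝ)+2))
    (hy1 : 3 ≤ py v) (hy2 : py v ≤ 2*(k:ℝ)-2) :
    ∃ i, (2 ≤ i ∧ i ≤ k-1) ∧ ∃ i', (1 ≤ i' ∧ i' ≤ k-1) ∧
      v ∈ (corridorPk k i' j).toSet ∧ v ∈ (roomRect k i).toSet := by
  have hk3 : (3:ℝ) ≤ (k:ℝ) := by exact_mod_cast hk
  have hvS : v ∈ PkRegion k := frontier_mem_region hv.1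
  have hb := region_bounds hk hvS
  have hcg := col_ge (k := k) hj1
  have hcl := col_le hk hjk
  rcases cover hk hb.2.2.1 hb.2.2.2 with ⟨m, hm1, hmk, ha, hbb⟩ | ⟨m, hm1, hmk, ha, hbb⟩
  · -- room level m
    have hm2 : 2 ≤ m := by
      by_contra hcon
      have hm1' : m = 1 := by omega
      rw [hm1', rb_one hk] at ha
      linarith
    have hmk1 : m ≤ k - 1 := by
      by_contra hcon
      have : m = k := by omega
      rw [this, rb_k] at hbb
      linarith
    rcases eq_or_lt_of_le ha with heq | ha'
    · exact junction_bot hk hm2 hmk1 hj1 hjk hx1 hx2 heq.symm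
    rcases eq_or_lt_of_le hbb with heq | hbb'
    · exact junction_top hk hm2 hmk1 hj1 hjk hx1 hx2 heq
    · exact absurd hv (not_vertex_interior (roomRect_sub hk hm1 hmk)
        (roomRect_interior_mem.2 ⟨by linarith, by nlinarith, ha', hbb'⟩))
  · -- gap m
    rcases eq_or_lt_of_le ha with heq | ha'
    · -- py v = rb (m+1) + 1 : top junction of room m+1
      have h2 : 2 ≤ m + 1 := by omega
      have hk1 : m + 1 ≤ k - 1 := by
        by_contra hcon
        have : m + 1 = k := by omega
        rw [← heq, this, rb_k] at hy1
        linarith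
      exact junction_top hk h2 hk1 hj1 hjk hx1 hx2 heq.symm
    rcases eq_or_lt_of_le hbb with heq | hbb'
    · -- py v = rb m : bottom junction of room m
      have hm2 : 2 ≤ m := by
        by_contra hcon
        have : m = 1 := by omega
        rw [this, rb_one hk] at heq
        linarith
      exact junction_bot hk hm2 hmk hj1 hjk hx1 hx2 heq
    · -- strictly inside the gap
      rcases eq_or_lt_of_le hx1 with hex | hx1'
      · exact absurd hv (not_vertex_side hk hm1 (by omega) hj1 hjk ha' hbb' (Or.inl hex.symm))
      rcases eq_or_lt_of_le hx2 with hex | hx2'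
      · exact absurd hv (not_vertex_side hk hm1 (by omega) hj1 hjk ha' hbb' (Or.inr hex))
      · exact absurd hv (not_vertex_interior (corridorRect_sub hk hm1 hmk hj1 hjk)
          (corridorRect_interior_mem.2 ⟨hx1', hx2', ha', hbb'⟩))

end Vertex

section See
variable {k : ℕ}

lemma rsee_mem {S : Set Plane} {p q : Plane} (h : RSee S p q) : p ∈ S ∧ q ∈ S :=
  ⟨h ⟨min_le_left _ _, le_max_left _ _, min_le_left _ _, le_max_left _ _⟩,
   h ⟨min_le_right _ _, le_max_right _ _, min_le_right _ _, le_max_right _ _⟩⟩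

lemma rsee_pt {S : Set Plane} {p : Plane} {qx qy : ℝ} (h : RSee S p (pt qx qy)) (x y : ℝ)
    (hx1 : min (px p) qx ≤ x) (hx2 : x ≤ max (px p) qx)
    (hy1 : min (py p) qy ≤ y) (hy2 : y ≤ max (py p) qy) : pt x y ∈ S :=
  h ⟨hx1, hx2, hy1, hy2⟩

lemma rb2_val (hk : 3 ≤ k) : roomYBottom k 2 = 2*(k:ℝ)-3 := by
  rw [rb_mid hk (le_refl 2) (by omega)]; ring

lemma see_gap_strip (hk : 3 ≤ k) {j : ℕ} (hj1 : 1 ≤ j) (hjk : j ≤ k) {g : Plane}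
    (h : RSee (PkRegion k) g (pt (1+((j:ℝ)-1)*(2*(k:ℝ)+2) + 1/2) (2*(k:ℝ)-1))) :
    1+((j:ℝ)-1)*(2*(k:ℝ)+2) ≤ px g ∧ px g ≤ 2+((j:ℝ)-1)*(2*(k:ℝ)+2) := by
  have hk3 : (3:ℝ) ≤ (k:ℝ) := by exact_mod_cast hk
  have hrb2 : roomYBottom k 2 = 2*(k:ℝ)-3 := rb2_val hk
  have hrb1 : roomYBottom k 1 = 2*(k:ℝ) := rb_one hk
  have hyq1 : roomYBottom k (1+1) + 1 < 2*(k:ℝ)-1 := by rw [hrb2]; linarith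
  have hyq2 : (2*(k:ℝ)-1) < roomYBottom k 1 := by rw [hrb1]; linarith
  have hr : pt (px g) (2*(k:ℝ)-1) ∈ PkRegion k :=
    rsee_pt h _ _ (min_le_left _ _) (le_max_left _ _) (min_le_right _ _) (le_max_right _ _)
  obtain ⟨m, hm1, hmk, hcm1, hcm2⟩ := gap_col hk (le_refl 1) (by omega) hr hyq1 hyq2
  simp only [px_pt] at hcm1 hcm2
  rcases lt_trichotomy m j with hmj | hmj | hmj
  · exfalso
    have hmlt : (m:ℝ) + 1 ≤ (j:ℝ) := by exact_mod_cast hmj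
    have hr' : pt (3+((m:ℝ)-1)*(2*(k:ℝ)+2)) (2*(k:ℝ)-1) ∈ PkRegion k := by
      refine rsee_pt h _ _ (le_trans (min_le_left _ _) (by linarith)) ?_
        (min_le_right _ _) (le_max_right _ _)
      refine le_trans ?_ (le_max_right _ _)
      nlinarith
    obtain ⟨m', hm'1, hm'k, hc1, hc2⟩ := gap_col hk (le_refl 1) (by omega) hr' hyq1 hyq2
    simp only [px_pt] at hc1 hc2
    have : m' = m := col_close_eq hk hm'1 hm'k hm1 hmk hc1 hc2 (by linarith) (le_refl _)
      (by rw [abs_lt]; constructor <;> linarith)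
    subst this
    linarith
  · subst hmj; exact ⟨hcm1, hcm2⟩
  · exfalso
    have hmlt : (j:ℝ) + 1 ≤ (m:ℝ) := by exact_mod_cast hmj
    have hr' : pt (3+((j:ℝ)-1)*(2*(k:ℝ)+2)) (2*(k:ℝ)-1) ∈ PkRegion k := by
      refine rsee_pt h _ _ (le_trans (min_le_right _ _) (by linarith)) ?_
        (min_le_right _ _) (le_max_right _ _)
      refine le_trans ?_ (le_max_left _ _)
      nlinarith
    obtain ⟨m', hm'1, hm'k, hc1, hc2⟩ := gap_col hk (le_refl 1) (by omega) hr' hyq1 hyq2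
    simp only [px_pt] at hc1 hc2
    have : m' = j := col_close_eq hk hm'1 hm'k hj1 hjk hc1 hc2 (by linarith) (le_refl _)
      (by rw [abs_lt]; constructor <;> linarith)
    subst this
    linarith

set_option maxHeartbeats 1000000 in
lemma see_room_level (hk : 3 ≤ k) {i : ℕ} (hi1 : 1 ≤ i) (hik : i ≤ k) {g : Plane}
    (h : RSee (PkRegion k) g (pt (2*(k:ℝ)^2+4*(k:ℝ)+1) (roomYBottom k i + 1/2))) :
    roomYBottom k i ≤ py g ∧ py g ≤ roomYBottom k i + 1 := by
  have hk3 : (3:ℝ) ≤ (k:ℝ) := by exact_mod_cast hk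
  have hgS : g ∈ PkRegion k := (rsee_mem h).1
  have hb := region_bounds hk hgS
  have hr : pt (2*(k:ℝ)^2+4*(k:ℝ)+1) (py g) ∈ PkRegion k :=
    rsee_pt h _ _ (min_le_right _ _) (le_max_right _ _) (min_le_left _ _) (le_max_left _ _)
  obtain ⟨m, hm1, hmk, hrm1, hrm2⟩ := wall_level hk hr (by simp only [px_pt]; nlinarith)
  simp only [py_pt] at hrm1 hrm2
  rcases lt_trichotomy m i with hmi | hmi | hmi
  · exfalso
    have hanti := rb_anti hk hmi hik
    have hii : i - 1 + 1 = i := by omega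
    have hanti2 := rb_anti hk (show i-1 < i by omega) hik
    have hr' : pt (2*(k:ℝ)^2+4*(k:ℝ)+1) (roomYBottom k i + 5/4) ∈ PkRegion k := by
      refine rsee_pt h _ _ (min_le_right _ _) (le_max_right _ _)
        (le_trans (min_le_right _ _) (by linarith)) ?_
      refine le_trans ?_ (le_max_left _ _)
      linarith
    obtain ⟨m', hm'1, hm'k, hc1, hc2⟩ := wall_level hk hr' (by simp only [px_pt]; nlinarith)
    simp only [py_pt] at hc1 hc2
    refine gap_no_room hk (i := i-1) (by omega) (by omega) ?_ ?_ m' hm'1 hm'k ⟨hc1, hc2⟩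
    · rw [hii]; linarith
    · linarith
  · subst hmi; exact ⟨hrm1, hrm2⟩
  · exfalso
    have hanti := rb_anti hk hmi hmk
    have hgap := rb_gap hk hi1 (by omega)
    have hr' : pt (2*(k:ℝ)^2+4*(k:ℝ)+1) (roomYBottom k i - 1/4) ∈ PkRegion k := by
      refine rsee_pt h _ _ (min_le_right _ _) (le_max_right _ _)
        (le_trans (min_le_left _ _) (by linarith)) ?_
      refine le_trans ?_ (le_max_right _ _)
      linarith
    obtain ⟨m', hm'1, hm'k, hc1, hc2⟩ := wall_level hk hr' (by simp only [px_pt]; nlinarith)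
    simp only [py_pt] at hc1 hc2
    refine gap_no_room hk (i := i) hi1 (by omega) ?_ ?_ m' hm'1 hm'k ⟨hc1, hc2⟩
    · linarith [hgap.1]
    · linarith

end See

section Part1
variable {k : ℕ}

set_option maxHeartbeats 1000000 in
lemma part1 (hk : 3 ≤ k) : ∀ G : Finset Plane, IsGuardSet (PkRegion k) G →
    (∃ g ∈ G, ∃ i ∈ Finset.Icc 2 (k - 1),
      ∃ i' ∈ Finset.Icc 1 (k - 1), ∃ j ∈ Finset.Icc 1 k,
        g ∈ (corridorPk k i' j).toSet ∧ g ∈ (roomRect k i).toSet) →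
    ¬ DispersionAtLeast (PkRegion k) G ((4 * k + 1 : ℕ) : ℝ≥0∞) := by
  rintro G hG ⟨g, hgG, i, hi, i', hi', j, hj, hgc, hgr⟩ hdisp
  rw [Finset.mem_Icc] at hi hi' hj
  have hk3 : (3:ℝ) ≤ (k:ℝ) := by exact_mod_cast hk
  rw [corridorRect_mem] at hgc
  rw [roomRect_mem] at hgr
  have hik : (i:ℝ) ≤ (k:ℝ) - 1 := by
    have h2 : (i:ℝ) ≤ ((k-1:ℕ):ℝ) := by exact_mod_cast hi.2
    rw [Nat.cast_sub (by omega)] at h2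
    exact_mod_cast h2
  have hi2 : (2:ℝ) ≤ (i:ℝ) := by exact_mod_cast hi.1
  have hrbi : roomYBottom k i = 2*((k:ℝ) - i) + 1 := rb_mid hk hi.1 hi.2
  have hyg1 : 3 ≤ py g := by rw [hrbi] at hgr; linarith [hgr.2.2.1]
  have hyg2 : py g ≤ 2*(k:ℝ) - 2 := by rw [hrbi] at hgr; linarith [hgr.2.2.2]
  -- neighbor strip
  set j' := if j < k then j + 1 else j - 1 with hj'def
  have hj'1 : 1 ≤ j' := by rw [hj'def]; split <;> omega
  have hj'k : j' ≤ k := by rw [hj'def]; split <;> omega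
  have hjj' : j ≠ j' := by rw [hj'def]; split <;> omega
  have hcol : 1+((j':ℝ)-1)*(2*(k:ℝ)+2) = 1+((j:ℝ)-1)*(2*(k:ℝ)+2) + (2*(k:ℝ)+2) ∨
      1+((j':ℝ)-1)*(2*(k:ℝ)+2) = 1+((j:ℝ)-1)*(2*(k:ℝ)+2) - (2*(k:ℝ)+2) := by
    rw [hj'def]
    split
    · left; push_cast; ring
    · right
      have hj1' : ((j-1:ℕ):ℝ) = (j:ℝ) - 1 := by
        rw [Nat.cast_sub (by omega)]; norm_num
      rw [hj1']; ring
  have hrb2 : roomYBottom k 2 = 2*(k:ℝ)-3 := rb2_val hk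
  have hrb1 : roomYBottom k 1 = 2*(k:ℝ) := rb_one hk
  have hqS : pt (1+((j':ℝ)-1)*(2*(k:ℝ)+2) + 1/2) (2*(k:ℝ)-1) ∈ PkRegion k := by
    apply corridor_sub hk (i := 1) (j := j') (le_refl 1) (by omega) hj'1 hj'k
    · simp only [px_pt]; linarith
    · simp only [px_pt]; linarith
    · simp only [py_pt]
      show roomYBottom k (1+1) + 1 ≤ _
      rw [hrb2]; linarith
    · simp only [py_pt]; rw [hrb1]; linarith
  obtain ⟨g'', hg''G, hsee⟩ := hG.2 _ hqS
  obtain ⟨hgx1, hgx2⟩ := see_gap_strip hk hj'1 hj'k hsee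
  have hvert := hG.1 g'' hg''G
  obtain ⟨hgy1, hgy2⟩ := vertex_strip_y hk hj'1 hj'k hvert hgx1 hgx2
  have hne : g ≠ g'' := by
    intro heq
    refine hjj' (col_close_eq hk hj.1 hj.2 hj'1 hj'k hgc.1 hgc.2.1 hgx1 hgx2 ?_)
    rw [heq, sub_self, abs_zero]
    positivity
  have hDaL := hdisp g hgG g'' hg''G hne
  have hcgj := col_ge (k := k) hj.1
  have hclj := col_le hk hj.2
  have hcgj' := col_ge (k := k) hj'1
  have hclj' := col_le hk hj'k
  have hupper : geodesic (PkRegion k) g g'' ≤ edist g g'' := by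
    apply geodesic_le_lpath
    · intro r hry hr1 hr2
      apply room_sub (i := i) hk (by omega) (by omega)
      · have h0 : (0:ℝ) ≤ min (px g) (px g'') := le_min (by linarith) (by linarith)
        linarith
      · have h0 : max (px g) (px g'') ≤ 2*(k:ℝ)^2+4*(k:ℝ)+1 :=
          max_le (by nlinarith) (by nlinarith)
        linarith
      · rw [hry]; exact hgr.2.2.1
      · rw [hry]; exact hgr.2.2.2
    · intro r hrx hr1 hr2
      apply strip_sub hk hj'1 hj'k
      · rw [hrx]; exact hgx1
      · rw [hrx]; exact hgx2
      · have h0 : (0:ℝ) ≤ min (py g) (py g'') := le_min (by linarith) (by linarith)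
        linarith
      · have h0 : max (py g) (py g'') ≤ 2*(k:ℝ)+1 := max_le (by linarith) (by linarith)
        linarith
  have hedist : edist g g'' ≤ ENNReal.ofReal (4*(k:ℝ)) := by
    rw [edist_eq]
    apply ENNReal.ofReal_le_ofReal
    have hdx : |px g - px g''| ≤ 2*(k:ℝ)+3 := by
      rw [abs_le]
      rcases hcol with h | h <;> constructor <;> linarith
    have hdy : |py g - py g''| ≤ 2*(k:ℝ)-3 := by
      rw [abs_le]; constructor <;> linarith
    linarith
  have hfinal : ((4 * k + 1 : ℕ) : ℝ≥0∞) ≤ ENNReal.ofReal (4*(k:ℝ)) :=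
    le_trans hDaL (le_trans hupper hedist)
  rw [← ENNReal.ofReal_natCast] at hfinal
  have hcon := (ENNReal.ofReal_le_ofReal_iff (by positivity)).1 hfinal
  push_cast at hcon
  linarith

end Part1

section Part2
variable {k : ℕ}

lemma dispersion_le_geodesic {S : Set Plane} {G : Finset Plane} {g g' : Plane}
    (hg : g ∈ G) (hg' : g' ∈ G) (hne : g ≠ g') :
    dispersion S G ≤ geodesic S g g' := by
  unfold dispersion
  exact iInf_le_of_le g (iInf_le_of_le hg (iInf_le_of_le g'
    (iInf_le_of_le hg' (iInf_le_of_le hne le_rfl))))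

lemma le_dispersion {S : Set Plane} {G : Finset Plane} {c : ℝ≥0∞}
    (h : ∀ g ∈ G, ∀ g' ∈ G, g ≠ g' → c ≤ geodesic S g g') : c ≤ dispersion S G :=
  le_iInf fun g => le_iInf fun hg => le_iInf fun g' => le_iInf fun hg' =>
    le_iInf fun hne => h g hg g' hg' hne

lemma edist_ge_dx {p q : Plane} : ENNReal.ofReal |px p - px q| ≤ edist p q := by
  rw [edist_eq]
  exact ENNReal.ofReal_le_ofReal (by linarith [abs_nonneg (py p - py q)])

lemma dist_pt (a b c d : ℝ) : dist (pt a b) (pt c d) = |a - c| + |b - d| := by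
  rw [dist_eq]; simp

/-- The `y`-coordinate of the strip guard of the `j`-th strip. -/
def sgY (k j : ℕ) : ℝ := if j % 2 = 1 then 2*(k:ℝ) else 1

/-- The strip guard of the `j`-th strip. -/
def sg (k j : ℕ) : Plane := pt (1+((j:ℝ)-1)*(2*(k:ℝ)+2)) (sgY k j)

/-- The room guard of room `i`. -/
def rg (k i : ℕ) : Plane := pt (2*(k:ℝ)^2+4*(k:ℝ)+1) (roomYBottom k i)

/-- The explicit optimal guard set. -/
def G0 (k : ℕ) : Finset Plane :=
  (Finset.Icc 1 k).image (sg k) ∪ (Finset.Icc 2 (k-1)).image (rg k)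

lemma sgY_mem (j : ℕ) (hk : 3 ≤ k) : sgY k j = 1 ∨ sgY k j = 2*(k:ℝ) := by
  unfold sgY; split <;> simp

lemma sgY_bounds (j : ℕ) (hk : 3 ≤ k) : 1 ≤ sgY k j ∧ sgY k j ≤ 2*(k:ℝ) := by
  have hk3 : (3:ℝ) ≤ (k:ℝ) := by exact_mod_cast hk
  rcases sgY_mem (k := k) j hk with h | h <;> rw [h] <;> constructor <;> linarith

lemma not_interior_of_approach {S : Set Plane} {v : Plane}
    (h : ∀ ε > (0:ℝ), ∃ w : Plane, dist w v < ε ∧ w ∉ S) : v ∉ interior S := by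
  intro hint
  rw [mem_interior_iff_mem_nhds, Metric.mem_nhds_iff] at hint
  obtain ⟨ε, hε, hball⟩ := hint
  obtain ⟨w, hw1, hw2⟩ := h ε hε
  exact hw2 (hball (by rwa [Metric.mem_ball]))

lemma mem_frontier_of {v : Plane} (hv : v ∈ PkRegion k)
    (h : ∀ ε > (0:ℝ), ∃ w : Plane, dist w v < ε ∧ w ∉ PkRegion k) :
    v ∈ frontier (PkRegion k) :=
  ⟨subset_closure hv, not_interior_of_approach h⟩

lemma isVertex_of_three (v : Plane) (hv : v ∈ frontier (PkRegion k))
    (h3 : ∀ ε > (0:ℝ), ∃ w1 w2 : Plane, w1 ∈ frontier (PkRegion k) ∧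
      w2 ∈ frontier (PkRegion k) ∧ dist w1 v < ε ∧ dist w2 v < ε ∧
      px w1 ≠ px v ∧ py w1 = py v ∧ px w2 = px v ∧ py w2 ≠ py v) :
    IsVertex (PkRegion k) v := by
  refine ⟨hv, fun ε hε => ?_⟩
  rintro ⟨a, b, c, hab, hline⟩
  obtain ⟨w1, w2, hf1, hf2, hd1, hd2, hx1, hy1, hx2, hy2⟩ := h3 ε hε
  have e0 := hline v ⟨hv, Metric.mem_ball_self hε⟩
  have e1 := hline w1 ⟨hf1, by rwa [Metric.mem_ball]⟩
  have e2 := hline w2 ⟨hf2, by rwa [Metric.mem_ball]⟩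
  have ha : a = 0 := by
    have h' : a * (px w1 - px v) = 0 := by rw [hy1] at e1; linarith
    rcases mul_eq_zero.1 h' with h'' | h''
    · exact h''
    · exact absurd (sub_eq_zero.1 h'') hx1
  have hb : b = 0 := by
    have h' : b * (py w2 - py v) = 0 := by rw [hx2] at e2; linarith
    rcases mul_eq_zero.1 h' with h'' | h''
    · exact h''
    · exact absurd (sub_eq_zero.1 h'') hy2
  rcases hab with h | h <;> [exact h ha; exact h hb]

lemma left_of_col_not_mem (hk : 3 ≤ k) {j i : ℕ} (hj1 : 1 ≤ j) (hjk : j ≤ k)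
    (hi1 : 1 ≤ i) (hik : i + 1 ≤ k) {x y : ℝ}
    (hx1 : 1+((j:ℝ)-1)*(2*(k:ℝ)+2) - 1/2 ≤ x) (hx2 : x < 1+((j:ℝ)-1)*(2*(k:ℝ)+2))
    (hy1 : roomYBottom k (i+1) + 1 < y) (hy2 : y < roomYBottom k i) :
    pt x y ∉ PkRegion k := by
  intro hmem
  have hk3 : (3:ℝ) ≤ (k:ℝ) := by exact_mod_cast hk
  obtain ⟨m, hm1, hmk, hc1, hc2⟩ := gap_col hk hi1 hik hmem
    (by simpa using hy1) (by simpa using hy2)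
  simp only [px_pt] at hc1 hc2
  have heq : m = j := col_close_eq hk hm1 hmk hj1 hjk hc1 hc2 (le_refl _) (by linarith)
    (by rw [abs_lt]; constructor <;> linarith)
  subst heq
  linarith

lemma right_of_wall_not_mem (hk : 3 ≤ k) {x y : ℝ} (hx : 2*(k:ℝ)^2+4*(k:ℝ)+1 < x) :
    pt x y ∉ PkRegion k := by
  intro hmem
  have := (region_bounds hk hmem).2.1
  simp only [px_pt] at this
  linarith

lemma gapwall_not_mem (hk : 3 ≤ k) {i : ℕ} (hi1 : 1 ≤ i) (hik : i + 1 ≤ k) {x y : ℝ}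
    (hx : 2*(k:ℝ)^2 < x) (hy1 : roomYBottom k (i+1) + 1 < y) (hy2 : y < roomYBottom k i) :
    pt x y ∉ PkRegion k := by
  intro hmem
  obtain ⟨m, hm1, hmk, hc1, hc2⟩ := gap_col hk hi1 hik hmem
    (by simpa using hy1) (by simpa using hy2)
  simp only [px_pt] at hc1 hc2
  have := col_le hk hmk
  linarith

lemma isVertex_sg (hk : 3 ≤ k) {j : ℕ} (hj1 : 1 ≤ j) (hjk : j ≤ k) :
    IsVertex (PkRegion k) (sg k j) := by
  have hk3 : (3:ℝ) ≤ (k:ℝ) := by exact_mod_cast hk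
  have hcg := col_ge (k := k) hj1
  have hcl := col_le hk hjk
  have hrb1 : roomYBottom k 1 = 2*(k:ℝ) := rb_one hk
  have hrb2 : roomYBottom k (1+1) = 2*(k:ℝ)-3 := rb2_val hk
  have hrbk : roomYBottom k ((k-1)+1) = 0 := by
    rw [show (k-1)+1 = k by omega]; exact rb_k
  have hrbk1 : roomYBottom k (k-1) = 3 := by
    rw [rb_mid hk (by omega) (le_refl _)]
    rw [Nat.cast_sub (by omega)]; push_cast; ring
  set X : ℝ := 1+((j:ℝ)-1)*(2*(k:ℝ)+2) with hX
  rcases sgY_mem (k := k) j hk with hy | hy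
  · -- bottom guard : (X, 1), corner of corridor (k-1, j)
    have houtside : ∀ t : ℝ, 0 < t → t ≤ 1/2 → pt (X - t) (1 + t) ∉ PkRegion k := by
      intro t ht0 ht1
      apply left_of_col_not_mem hk hj1 hjk (i := k-1) (by omega) (by omega)
        (by linarith) (by linarith) (by rw [hrbk]; linarith) (by rw [hrbk1]; linarith)
    have hvS : sg k j ∈ PkRegion k := by
      unfold sg; rw [hy]
      apply corridor_sub hk (i := k-1) (by omega) (le_refl _) hj1 hjk
      · simp
      · simp only [px_pt]; linarith
      · simp only [py_pt]; rw [hrbk]; norm_num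
      · simp only [py_pt]; rw [hrbk1]; linarith
    have hcoords : px (sg k j) = X ∧ py (sg k j) = 1 := by unfold sg; rw [hy]; exact ⟨rfl, rfl⟩
    have hsg : sg k j = pt X 1 := by rw [hX]; unfold sg; rw [hy]
    apply isVertex_of_three _ (mem_frontier_of hvS ?_)
    · intro ε hε
      set δ : ℝ := min (ε/2) (1/4) with hδ
      have hδ0 : 0 < δ := lt_min (by linarith) (by norm_num)
      have hδ1 : δ ≤ 1/4 := min_le_right _ _
      have hδ2 : δ ≤ ε/2 := min_le_left _ _
      refine ⟨pt (X - δ) 1, pt X (1 + δ), ?_, ?_, ?_, ?_, ?_, ?_, ?_, ?_⟩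
      · refine mem_frontier_of ?_ ?_
        · apply room_sub hk (i := k) (by omega) (le_refl _)
          · simp only [px_pt]; linarith
          · simp only [px_pt]; nlinarith
          · simp only [py_pt]; rw [rb_k]; norm_num
          · simp only [py_pt]; rw [rb_k]; norm_num
        · intro ε' hε'
          refine ⟨pt (X - δ) (1 + min (ε'/2) (1/4)), ?_, ?_⟩
          · rw [dist_pt]
            have : 0 < min (ε'/2) (1/4) := lt_min (by linarith) (by norm_num)
            rw [show X - δ - (X - δ) = 0 by ring, abs_zero,
              show 1 + min (ε'/2) (1/4) - 1 = min (ε'/2) (1/4) by ring,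
              abs_of_pos this]
            have := min_le_left (ε'/2) (1/4)
            linarith
          · apply left_of_col_not_mem hk hj1 hjk (i := k-1) (by omega) (by omega)
              (by linarith) (by linarith)
              (by rw [hrbk]; have := lt_min (show 0 < ε'/2 by linarith)
                    (show (0:ℝ) < 1/4 by norm_num); linarith)
              (by rw [hrbk1]; have := min_le_right (ε'/2) (1/4); linarith)
      · refine mem_frontier_of ?_ ?_
        · apply corridor_sub hk (i := k-1) (by omega) (le_refl _) hj1 hjk
          · simp only [px_pt]; linarith
          · simp only [px_pt]; linarith
          · simp only [py_pt]; rw [hrbk]; linarith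
          · simp only [py_pt]; rw [hrbk1]; linarith
        · intro ε' hε'
          set t : ℝ := min (ε'/2) (1/4) with htdef
          have ht0 : 0 < t := lt_min (by linarith) (by norm_num)
          have ht1 : t ≤ 1/4 := min_le_right _ _
          refine ⟨pt (X - t) (1 + δ), ?_, ?_⟩
          · rw [dist_pt]
            rw [show X - t - X = -t by ring, abs_neg, abs_of_pos ht0,
              show 1 + δ - (1 + δ) = 0 by ring, abs_zero]
            have := min_le_left (ε'/2) (1/4)
            linarith
          · apply left_of_col_not_mem hk hj1 hjk (i := k-1) (by omega) (by omega)
              (by linarith) (by linarith) (by rw [hrbk]; linarith)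
              (by rw [hrbk1]; linarith)
      · rw [hsg, dist_pt]
        rw [show X - δ - X = -δ by ring, abs_neg, abs_of_pos hδ0, sub_self, abs_zero]
        linarith
      · rw [hsg, dist_pt]
        rw [sub_self, abs_zero, show 1 + δ - 1 = δ by ring, abs_of_pos hδ0]
        linarith
      · rw [hcoords.1]; simp only [px_pt]; linarith
      · rw [hcoords.2]; simp only [py_pt]
      · rw [hcoords.1]; simp only [px_pt]
      · rw [hcoords.2]; simp only [py_pt]; linarith
    · intro ε hε
      set t : ℝ := min (ε/4) (1/4) with htdef
      have ht0 : 0 < t := lt_min (by linarith) (by norm_num)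
      have ht1 : t ≤ 1/4 := min_le_right _ _
      refine ⟨pt (X - t) (1 + t), ?_, houtside t ht0 (by linarith)⟩
      rw [hsg, dist_pt]
      rw [show X - t - X = -t by ring, abs_neg, abs_of_pos ht0,
        show 1 + t - 1 = t by ring, abs_of_pos ht0]
      have ht2 : t ≤ ε/4 := htdef.le.trans (min_le_left _ _)
      linarith
  · -- top guard : (X, 2k), corner of corridor (1, j)
    have houtside : ∀ t : ℝ, 0 < t → t ≤ 1/2 → pt (X - t) (2*(k:ℝ) - t) ∉ PkRegion k := by
      intro t ht0 ht1
      apply left_of_col_not_mem hk hj1 hjk (i := 1) (by omega) (by omega)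
        (by linarith) (by linarith) (by rw [hrb2]; linarith) (by rw [hrb1]; linarith)
    have hvS : sg k j ∈ PkRegion k := by
      unfold sg; rw [hy]
      apply corridor_sub hk (i := 1) (by omega) (by omega) hj1 hjk
      · simp
      · simp only [px_pt]; linarith
      · simp only [py_pt]; rw [hrb2]; linarith
      · simp only [py_pt]; rw [hrb1]
    have hcoords : px (sg k j) = X ∧ py (sg k j) = 2*(k:ℝ) := by
      unfold sg; rw [hy]; exact ⟨rfl, rfl⟩
    have hsg : sg k j = pt X (2*(k:ℝ)) := by rw [hX]; unfold sg; rw [hy]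
    apply isVertex_of_three _ (mem_frontier_of hvS ?_)
    · intro ε hε
      set δ : ℝ := min (ε/2) (1/4) with hδ
      have hδ0 : 0 < δ := lt_min (by linarith) (by norm_num)
      have hδ1 : δ ≤ 1/4 := min_le_right _ _
      have hδ2 : δ ≤ ε/2 := min_le_left _ _
      refine ⟨pt (X - δ) (2*(k:ℝ)), pt X (2*(k:ℝ) - δ), ?_, ?_, ?_, ?_, ?_, ?_, ?_, ?_⟩
      · refine mem_frontier_of ?_ ?_
        · apply room_sub hk (i := 1) (by omega) (by omega)
          · simp only [px_pt]; linarith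
          · simp only [px_pt]; nlinarith
          · simp only [py_pt]; rw [hrb1]
          · simp only [py_pt]; rw [hrb1]; linarith
        · intro ε' hε'
          set t : ℝ := min (ε'/2) (1/4) with htdef
          have ht0 : 0 < t := lt_min (by linarith) (by norm_num)
          have ht1 : t ≤ 1/4 := min_le_right _ _
          refine ⟨pt (X - δ) (2*(k:ℝ) - t), ?_, ?_⟩
          · rw [dist_pt]
            rw [show X - δ - (X - δ) = 0 by ring, abs_zero,
              show 2*(k:ℝ) - t - 2*(k:ℝ) = -t by ring, abs_neg, abs_of_pos ht0]
            have := min_le_left (ε'/2) (1/4)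
            linarith
          · apply left_of_col_not_mem hk hj1 hjk (i := 1) (by omega) (by omega)
              (by linarith) (by linarith) (by rw [hrb2]; linarith)
              (by rw [hrb1]; linarith)
      · refine mem_frontier_of ?_ ?_
        · apply corridor_sub hk (i := 1) (by omega) (by omega) hj1 hjk
          · simp only [px_pt]; linarith
          · simp only [px_pt]; linarith
          · simp only [py_pt]; rw [hrb2]; linarith
          · simp only [py_pt]; rw [hrb1]; linarith
        · intro ε' hε'
          set t : ℝ := min (ε'/2) (1/4) with htdef
          have ht0 : 0 < t := lt_min (by linarith) (by norm_num)
          have ht1 : t ≤ 1/4 := min_le_right _ _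
          refine ⟨pt (X - t) (2*(k:ℝ) - δ), ?_, ?_⟩
          · rw [dist_pt]
            rw [show X - t - X = -t by ring, abs_neg, abs_of_pos ht0,
              show 2*(k:ℝ) - δ - (2*(k:ℝ) - δ) = 0 by ring, abs_zero]
            have := min_le_left (ε'/2) (1/4)
            linarith
          · apply left_of_col_not_mem hk hj1 hjk (i := 1) (by omega) (by omega)
              (by linarith) (by linarith) (by rw [hrb2]; linarith)
              (by rw [hrb1]; linarith)
      · rw [hsg, dist_pt]
        rw [show X - δ - X = -δ by ring, abs_neg, abs_of_pos hδ0, sub_self, abs_zero]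
        linarith
      · rw [hsg, dist_pt]
        rw [sub_self, abs_zero, show 2*(k:ℝ) - δ - 2*(k:ℝ) = -δ by ring, abs_neg,
          abs_of_pos hδ0]
        linarith
      · rw [hcoords.1]; simp only [px_pt]; linarith
      · rw [hcoords.2]; simp only [py_pt]
      · rw [hcoords.1]; simp only [px_pt]
      · rw [hcoords.2]; simp only [py_pt]; linarith
    · intro ε hε
      set t : ℝ := min (ε/4) (1/4) with htdef
      have ht0 : 0 < t := lt_min (by linarith) (by norm_num)
      have ht1 : t ≤ 1/4 := min_le_right _ _
      refine ⟨pt (X - t) (2*(k:ℝ) - t), ?_, houtside t ht0 (by linarith)⟩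
      rw [hsg, dist_pt]
      rw [show X - t - X = -t by ring, abs_neg, abs_of_pos ht0,
        show 2*(k:ℝ) - t - 2*(k:ℝ) = -t by ring, abs_neg, abs_of_pos ht0]
      have ht2 : t ≤ ε/4 := htdef.le.trans (min_le_left _ _)
      linarith

lemma isVertex_rg (hk : 3 ≤ k) {i : ℕ} (hi2 : 2 ≤ i) (hik : i ≤ k-1) :
    IsVertex (PkRegion k) (rg k i) := by
  have hk3 : (3:ℝ) ≤ (k:ℝ) := by exact_mod_cast hk
  set W : ℝ := 2*(k:ℝ)^2+4*(k:ℝ)+1 with hW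
  have hgap := rb_gap hk (show 1 ≤ i by omega) (by omega)
  have hrbn : 0 ≤ roomYBottom k i := rb_nonneg
  have hrbl : roomYBottom k i ≤ 2*(k:ℝ) := rb_le_2k hk (by omega)
  have hcoords : px (rg k i) = W ∧ py (rg k i) = roomYBottom k i := ⟨rfl, rfl⟩
  have hsg : rg k i = pt W (roomYBottom k i) := by rw [hW]; rfl
  have hvS : rg k i ∈ PkRegion k := by
    apply room_sub hk (i := i) (by omega) (by omega)
    · simp only [rg, px_pt]; nlinarith
    · simp only [rg, px_pt]; linarith
    · simp only [rg, py_pt]; exact le_rfl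
    · simp only [rg, py_pt]; linarith
  apply isVertex_of_three _ (mem_frontier_of hvS ?_)
  · intro ε hε
    set δ : ℝ := min (ε/2) (1/4) with hδ
    have hδ0 : 0 < δ := lt_min (by linarith) (by norm_num)
    have hδ1 : δ ≤ 1/4 := min_le_right _ _
    have hδ2 : δ ≤ ε/2 := min_le_left _ _
    refine ⟨pt (W - δ) (roomYBottom k i), pt W (roomYBottom k i + δ), ?_, ?_, ?_, ?_, ?_, ?_, ?_, ?_⟩
    · refine mem_frontier_of ?_ ?_
      · apply room_sub hk (i := i) (by omega) (by omega)
        · simp only [px_pt]; nlinarith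
        · simp only [px_pt]; linarith
        · simp only [py_pt]; exact le_rfl
        · simp only [py_pt]; linarith
      · intro ε' hε'
        set t : ℝ := min (ε'/2) (1/4) with htdef
        have ht0 : 0 < t := lt_min (by linarith) (by norm_num)
        have ht1 : t ≤ 1/4 := min_le_right _ _
        refine ⟨pt (W - δ) (roomYBottom k i - t), ?_, ?_⟩
        · rw [dist_pt]
          rw [show W - δ - (W - δ) = 0 by ring, abs_zero,
            show roomYBottom k i - t - roomYBottom k i = -t by ring, abs_neg, abs_of_pos ht0]
          have := min_le_left (ε'/2) (1/4)
          linarith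
        · apply gapwall_not_mem hk (i := i) (by omega) (by omega)
            (by nlinarith) (by linarith) (by linarith)
    · refine mem_frontier_of ?_ ?_
      · apply room_sub hk (i := i) (by omega) (by omega)
        · simp only [px_pt]; nlinarith
        · simp only [px_pt]; linarith
        · simp only [py_pt]; linarith
        · simp only [py_pt]; linarith
      · intro ε' hε'
        set t : ℝ := min (ε'/2) (1/4) with htdef
        have ht0 : 0 < t := lt_min (by linarith) (by norm_num)
        refine ⟨pt (W + t) (roomYBottom k i + δ), ?_, ?_⟩
        · rw [dist_pt]
          rw [show W + t - W = t by ring, abs_of_pos ht0,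
            show roomYBottom k i + δ - (roomYBottom k i + δ) = 0 by ring, abs_zero]
          have := min_le_left (ε'/2) (1/4)
          linarith
        · exact right_of_wall_not_mem hk (by linarith)
    · rw [hsg, dist_pt]
      rw [show W - δ - W = -δ by ring, abs_neg, abs_of_pos hδ0, sub_self, abs_zero]
      linarith
    · rw [hsg, dist_pt]
      rw [sub_self, abs_zero, show roomYBottom k i + δ - roomYBottom k i = δ by ring,
        abs_of_pos hδ0]
      linarith
    · rw [hcoords.1]; simp only [px_pt]; linarith
    · rw [hcoords.2]; simp only [py_pt]
    · rw [hcoords.1]; simp only [px_pt]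
    · rw [hcoords.2]; simp only [py_pt]; linarith
  · intro ε hε
    set t : ℝ := min (ε/2) (1/4) with htdef
    have ht0 : 0 < t := lt_min (by linarith) (by norm_num)
    refine ⟨pt (W + t) (roomYBottom k i), ?_, right_of_wall_not_mem hk (by linarith)⟩
    rw [hsg, dist_pt]
    rw [show W + t - W = t by ring, abs_of_pos ht0, sub_self, abs_zero]
    have := min_le_left (ε/2) (1/4)
    linarith

end Part2

section Part3
variable {k : ℕ}

lemma rsee_of_rect {S : Set Plane} {g p : Plane} (lo hi lo' hi' : ℝ)
    (hg1 : lo ≤ px g) (hg2 : px g ≤ hi) (hp1 : lo ≤ px p) (hp2 : px p ≤ hi)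
    (hg3 : lo' ≤ py g) (hg4 : py g ≤ hi') (hp3 : lo' ≤ py p) (hp4 : py p ≤ hi')
    (hsub : ∀ r : Plane, lo ≤ px r → px r ≤ hi → lo' ≤ py r → py r ≤ hi' → r ∈ S) :
    RSee S g p := by
  rintro r ⟨h1, h2, h3, h4⟩
  exact hsub r (le_trans (le_min hg1 hp1) h1) (le_trans h2 (max_le hg2 hp2))
    (le_trans (le_min hg3 hp3) h3) (le_trans h4 (max_le hg4 hp4))

lemma sg_px (j : ℕ) : px (sg k j) = 1+((j:ℝ)-1)*(2*(k:ℝ)+2) := rfl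
lemma sg_py (j : ℕ) : py (sg k j) = sgY k j := rfl
lemma rg_px (i : ℕ) : px (rg k i) = 2*(k:ℝ)^2+4*(k:ℝ)+1 := rfl
lemma rg_py (i : ℕ) : py (rg k i) = roomYBottom k i := rfl

lemma rbmid_bounds (hk : 3 ≤ k) {i : ℕ} (hi2 : 2 ≤ i) (hik : i ≤ k-1) :
    3 ≤ roomYBottom k i ∧ roomYBottom k i + 1 ≤ 2*(k:ℝ)-2 := by
  have h := rb_mid hk hi2 hik
  have h1 : (2:ℝ) ≤ (i:ℝ) := by exact_mod_cast hi2
  have h2 : (i:ℝ) ≤ (k:ℝ) - 1 := by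
    have : (i:ℝ) ≤ ((k-1:ℕ):ℝ) := by exact_mod_cast hik
    rw [Nat.cast_sub (by omega)] at this
    exact_mod_cast this
  rw [h]
  constructor <;> linarith

lemma G0_guard (hk : 3 ≤ k) : IsGuardSet (PkRegion k) (G0 k) := by
  have hk3 : (3:ℝ) ≤ (k:ℝ) := by exact_mod_cast hk
  constructor
  · intro g hg
    rcases Finset.mem_union.1 hg with h | h
    · obtain ⟨j, hj, rfl⟩ := Finset.mem_image.1 h
      rw [Finset.mem_Icc] at hj
      exact isVertex_sg hk hj.1 hj.2
    · obtain ⟨i, hi, rfl⟩ := Finset.mem_image.1 h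
      rw [Finset.mem_Icc] at hi
      exact isVertex_rg hk hi.1 hi.2
  · intro p hp
    rcases mem_region_iff.1 hp with ⟨i, ⟨hi1, hik⟩, hx0, hxW, hy1, hy2⟩ |
      ⟨i, ⟨hi1, hik⟩, j, ⟨hj1, hjk⟩, hx1, hx2, hy1, hy2⟩
    · by_cases hc1 : i = 1
      · subst hc1
        refine ⟨sg k 1, Finset.mem_union_left _ (Finset.mem_image.2
          ⟨1, Finset.mem_Icc.2 ⟨le_rfl, by omega⟩, rfl⟩), ?_⟩
        have hy : sgY k 1 = 2*(k:ℝ) := by unfold sgY; norm_num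
        refine rsee_of_rect 0 (2*(k:ℝ)^2+4*(k:ℝ)+1) (roomYBottom k 1) (roomYBottom k 1 + 1)
          ?_ ?_ hx0 hxW ?_ ?_ hy1 hy2 ?_
        · rw [sg_px]; norm_num
        · rw [sg_px]; push_cast; nlinarith
        · rw [sg_py, hy, rb_one hk]
        · rw [sg_py, hy, rb_one hk]; linarith
        · intro r h1 h2 h3 h4
          exact room_sub hk (i := 1) le_rfl (by omega) h1 h2 h3 h4
      by_cases hck : i = k
      · rw [hck] at hy1 hy2
        refine ⟨sg k 2, Finset.mem_union_left _ (Finset.mem_image.2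
          ⟨2, Finset.mem_Icc.2 ⟨by omega, by omega⟩, rfl⟩), ?_⟩
        have hy : sgY k 2 = 1 := by unfold sgY; norm_num
        refine rsee_of_rect 0 (2*(k:ℝ)^2+4*(k:ℝ)+1) (roomYBottom k k) (roomYBottom k k + 1)
          ?_ ?_ hx0 hxW ?_ ?_ hy1 hy2 ?_
        · rw [sg_px]; push_cast; nlinarith
        · rw [sg_px]; push_cast; nlinarith
        · rw [sg_py, hy, rb_k]; norm_num
        · rw [sg_py, hy, rb_k]; norm_num
        · intro r h1 h2 h3 h4
          exact room_sub hk (i := k) (by omega) le_rfl h1 h2 h3 h4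
      · refine ⟨rg k i, Finset.mem_union_right _ (Finset.mem_image.2
          ⟨i, Finset.mem_Icc.2 ⟨by omega, by omega⟩, rfl⟩), ?_⟩
        refine rsee_of_rect 0 (2*(k:ℝ)^2+4*(k:ℝ)+1) (roomYBottom k i) (roomYBottom k i + 1)
          ?_ ?_ hx0 hxW ?_ ?_ hy1 hy2 ?_
        · rw [rg_px]; nlinarith
        · rw [rg_px]
        · rw [rg_py]
        · rw [rg_py]; linarith
        · intro r h1 h2 h3 h4
          exact room_sub hk (i := i) hi1 hik h1 h2 h3 h4
    · -- corridor point
      refine ⟨sg k j, Finset.mem_union_left _ (Finset.mem_image.2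
        ⟨j, Finset.mem_Icc.2 ⟨hj1, hjk⟩, rfl⟩), ?_⟩
      have hsb := sgY_bounds (k := k) j hk
      have hrn : 0 ≤ roomYBottom k (i+1) := rb_nonneg
      have hrl : roomYBottom k i ≤ 2*(k:ℝ) := rb_le_2k hk hi1
      refine rsee_of_rect (1+((j:ℝ)-1)*(2*(k:ℝ)+2)) (2+((j:ℝ)-1)*(2*(k:ℝ)+2))
        0 (2*(k:ℝ)+1) ?_ ?_ hx1 hx2 ?_ ?_ ?_ ?_ ?_
      · rw [sg_px]
      · rw [sg_px]; linarith
      · rw [sg_py]; linarith [hsb.1]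
      · rw [sg_py]; linarith [hsb.2]
      · linarith
      · linarith
      · intro r h1 h2 h3 h4
        exact strip_sub hk hj1 hjk h1 h2 h3 h4

lemma natN (k : ℕ) : ((4*k+1:ℕ):ℝ≥0∞) = ENNReal.ofReal (4*(k:ℝ)+1) := by
  rw [← ENNReal.ofReal_natCast]
  congr 1
  push_cast; ring

lemma rg_far (hk : 3 ≤ k) {a b : ℕ} (ha2 : 2 ≤ a) (hak : a ≤ k-1)
    (hb2 : 2 ≤ b) (hbk : b ≤ k-1) (hab : a ≠ b) :
    ((4*k+1:ℕ):ℝ≥0∞) ≤ geodesic (PkRegion k) (rg k a) (rg k b) := by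
  have hk3 : (3:ℝ) ≤ (k:ℝ) := by exact_mod_cast hk
  set c := max a b with hc
  have hc2 : 2 ≤ c := le_trans ha2 (le_max_left _ _)
  have hck : c ≤ k - 1 := by rw [hc]; omega
  have hcc : c - 1 + 1 = c := by omega
  have hsep : roomYBottom k c + 2 ≤ roomYBottom k (c-1) := by
    have := rb_anti hk (show c-1 < c by omega) (by omega)
    linarith
  have hy1 : roomYBottom k c + 5/4 < roomYBottom k (c-1) := by linarith
  apply crossing_le_geodesic _ _ _
    {m : Plane | py m = roomYBottom k c + 5/4 ∧ px m ≤ 2*(k:ℝ)^2}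
  · intro γ hγ
    have hcont : Continuous fun t : unitInterval => py (γ t) :=
      continuous_py.comp γ.continuous
    have h0 : py (γ 0) = roomYBottom k a := by rw [γ.source]; exact rg_py a
    have h1 : py (γ 1) = roomYBottom k b := by rw [γ.target]; exact rg_py b
    have hmem : roomYBottom k c + 5/4 ∈ uIcc (py (γ 0)) (py (γ 1)) := by
      rw [h0, h1, Set.mem_uIcc]
      rcases max_cases a b with ⟨hmx, hcase⟩ | ⟨hmx, hcase⟩
      · have hanti := rb_anti hk (show b < a by omega) (by omega)
        have hca : roomYBottom k c = roomYBottom k a := by rw [hc, hmx]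
        left
        constructor <;> linarith
      · have hanti := rb_anti hk (show a < b by omega) (by omega)
        have hcb : roomYBottom k c = roomYBottom k b := by rw [hc, hmx]
        right
        constructor <;> linarith
    have hrange : roomYBottom k c + 5/4 ∈ Set.range (fun t : unitInterval => py (γ t)) := by
      rw [Set.mem_uIcc] at hmem
      rcases hmem with ⟨ha', hb'⟩ | ⟨hb', ha'⟩
      · exact intermediate_value_univ 0 1 hcont ⟨ha', hb'⟩
      · exact intermediate_value_univ 1 0 hcont ⟨hb', ha'⟩
    obtain ⟨t, ht'⟩ := hrange
    have ht : py (γ t) = roomYBottom k c + 5/4 := ht'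
    have htS : γ t ∈ PkRegion k := hγ (Set.mem_range_self t)
    refine ⟨t, ht, ?_⟩
    obtain ⟨m, hm1, hmk, hhc1, hhc2⟩ := gap_col hk (i := c-1) (by omega) (by omega) htS
      (by rw [hcc, ht]; linarith) (by rw [ht]; linarith [hy1])
    have := col_le hk hmk
    linarith
  · rintro m ⟨hm1, hm2⟩
    have hlow : ENNReal.ofReal (4*(k:ℝ)+1) ≤ edist (rg k a) m := by
      refine le_trans ?_ edist_ge_dx
      apply ENNReal.ofReal_le_ofReal
      rw [rg_px]
      have : 4*(k:ℝ)+1 ≤ 2*(k:ℝ)^2+4*(k:ℝ)+1 - px m := by linarith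
      calc 4*(k:ℝ)+1 ≤ 2*(k:ℝ)^2+4*(k:ℝ)+1 - px m := this
        _ ≤ |2*(k:ℝ)^2+4*(k:ℝ)+1 - px m| := le_abs_self _
    rw [natN]
    exact le_trans hlow le_self_add

lemma G0_disp (hk : 3 ≤ k) : ((4*k+1:ℕ):ℝ≥0∞) ≤ dispersion (PkRegion k) (G0 k) := by
  have hk3 : (3:ℝ) ≤ (k:ℝ) := by exact_mod_cast hk
  apply le_dispersion
  intro g hg g' hg' hne
  rcases Finset.mem_union.1 hg with h | h <;> rcases Finset.mem_union.1 hg' with h' | h'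
  · -- sg , sg
    obtain ⟨j, hj, rfl⟩ := Finset.mem_image.1 h
    obtain ⟨j', hj', rfl⟩ := Finset.mem_image.1 h'
    rw [Finset.mem_Icc] at hj hj'
    have hjj : j ≠ j' := by rintro rfl; exact hne rfl
    refine le_trans ?_ (edist_le_geodesic _ _ _)
    rw [edist_eq, natN]
    apply ENNReal.ofReal_le_ofReal
    have hdiff : px (sg k j) - px (sg k j') = ((j:ℝ) - (j':ℝ)) * (2*(k:ℝ)+2) := by
      rw [sg_px, sg_px]; ring
    have hadj : (j' = j + 1 ∨ j = j' + 1) ∨ (j + 2 ≤ j' ∨ j' + 2 ≤ j) := by omega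
    rcases hadj with hadj | hfar
    · -- adjacent: y-coordinates differ by 2k-1
      have hdy : |py (sg k j) - py (sg k j')| = 2*(k:ℝ) - 1 := by
        rw [sg_py, sg_py]
        have hpar : (sgY k j = 1 ∧ sgY k j' = 2*(k:ℝ)) ∨
            (sgY k j = 2*(k:ℝ) ∧ sgY k j' = 1) := by
          have hmod : j % 2 ≠ j' % 2 := by omega
          unfold sgY
          rcases Nat.even_or_odd j with he | ho
          · have he' : j % 2 = 0 := Nat.even_iff.1 he
            have h1 : ¬ (j % 2 = 1) := by omega
            have h2 : j' % 2 = 1 := by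
              rcases hadj with rfl | rfl <;> omega
            rw [if_neg h1, if_pos h2]
            exact Or.inl ⟨rfl, rfl⟩
          · have h1 : j % 2 = 1 := Nat.odd_iff.1 ho
            have h2 : ¬ (j' % 2 = 1) := by omega
            rw [if_pos h1, if_neg h2]
            exact Or.inr ⟨rfl, rfl⟩
        rcases hpar with ⟨e1, e2⟩ | ⟨e1, e2⟩ <;> rw [e1, e2]
        · rw [show (1:ℝ) - 2*(k:ℝ) = -(2*(k:ℝ)-1) by ring, abs_neg, abs_of_pos (by linarith)]
        · rw [show (2*(k:ℝ)) - 1 = 2*(k:ℝ)-1 by ring, abs_of_pos (by linarith)]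
      have hdx : |px (sg k j) - px (sg k j')| = 2*(k:ℝ)+2 := by
        rw [hdiff]
        rcases hadj with rfl | rfl
        · rw [show ((j:ℝ) - ((j+1:ℕ):ℝ)) * (2*(k:ℝ)+2) = -(2*(k:ℝ)+2) by push_cast; ring,
            abs_neg, abs_of_pos (by linarith)]
        · rw [show (((j'+1:ℕ):ℝ) - (j':ℝ)) * (2*(k:ℝ)+2) = (2*(k:ℝ)+2) by push_cast; ring,
            abs_of_pos (by linarith)]
      rw [hdx, hdy]; linarith
    · -- far apart
      have hdx : 2*(2*(k:ℝ)+2) ≤ |px (sg k j) - px (sg k j')| := by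
        rcases hfar with hlt | hlt
        · have : (j:ℝ) + 2 ≤ (j':ℝ) := by exact_mod_cast hlt
          rw [hdiff]
          calc 2*(2*(k:ℝ)+2) ≤ -(((j:ℝ) - (j':ℝ)) * (2*(k:ℝ)+2)) := by nlinarith
            _ ≤ |((j:ℝ) - (j':ℝ)) * (2*(k:ℝ)+2)| := neg_le_abs _
        · have : (j':ℝ) + 2 ≤ (j:ℝ) := by exact_mod_cast hlt
          rw [hdiff]
          calc 2*(2*(k:ℝ)+2) ≤ ((j:ℝ) - (j':ℝ)) * (2*(k:ℝ)+2) := by nlinarith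
            _ ≤ |((j:ℝ) - (j':ℝ)) * (2*(k:ℝ)+2)| := le_abs_self _
      linarith [abs_nonneg (py (sg k j) - py (sg k j'))]
  · -- sg , rg
    obtain ⟨j, hj, rfl⟩ := Finset.mem_image.1 h
    obtain ⟨i, hi, rfl⟩ := Finset.mem_image.1 h'
    rw [Finset.mem_Icc] at hj hi
    refine le_trans ?_ (edist_le_geodesic _ _ _)
    rw [edist_eq, natN]
    apply ENNReal.ofReal_le_ofReal
    have hcl := col_le hk hj.2
    have hdx : 4*(k:ℝ)+1 ≤ |px (sg k j) - px (rg k i)| := by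
      rw [sg_px, rg_px]
      calc 4*(k:ℝ)+1 ≤ -((1+((j:ℝ)-1)*(2*(k:ℝ)+2)) - (2*(k:ℝ)^2+4*(k:ℝ)+1)) := by linarith
        _ ≤ _ := neg_le_abs _
    linarith [abs_nonneg (py (sg k j) - py (rg k i))]
  · -- rg , sg
    obtain ⟨i, hi, rfl⟩ := Finset.mem_image.1 h
    obtain ⟨j, hj, rfl⟩ := Finset.mem_image.1 h'
    rw [Finset.mem_Icc] at hj hi
    refine le_trans ?_ (edist_le_geodesic _ _ _)
    rw [edist_eq, natN]
    apply ENNReal.ofReal_le_ofReal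
    have hcl := col_le hk hj.2
    have hdx : 4*(k:ℝ)+1 ≤ |px (rg k i) - px (sg k j)| := by
      rw [sg_px, rg_px]
      calc 4*(k:ℝ)+1 ≤ (2*(k:ℝ)^2+4*(k:ℝ)+1) - (1+((j:ℝ)-1)*(2*(k:ℝ)+2)) := by linarith
        _ ≤ _ := le_abs_self _
    linarith [abs_nonneg (py (rg k i) - py (sg k j))]
  · -- rg , rg
    obtain ⟨i, hi, rfl⟩ := Finset.mem_image.1 h
    obtain ⟨i', hi', rfl⟩ := Finset.mem_image.1 h'
    rw [Finset.mem_Icc] at hi hi'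
    have hii : i ≠ i' := by rintro rfl; exact hne rfl
    exact rg_far hk hi.1 hi.2 hi'.1 hi'.2 hii

lemma part2 (hk : 3 ≤ k) :
    ∀ G : Finset Plane, AttainsMaxDispersion (PkRegion k) G → 2 * k - 2 ≤ G.card := by
  rintro G ⟨hGS, hmax⟩
  have hk3 : (3:ℝ) ≤ (k:ℝ) := by exact_mod_cast hk
  have hdisp : ((4*k+1:ℕ):ℝ≥0∞) ≤ dispersion (PkRegion k) G :=
    le_trans (G0_disp hk) (hmax _ (G0_guard hk))
  have hD : DispersionAtLeast (PkRegion k) G ((4*k+1:ℕ):ℝ≥0∞) :=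
    fun g hg g' hg' hne => le_trans hdisp (dispersion_le_geodesic hg hg' hne)
  have hrb2 : roomYBottom k 2 = 2*(k:ℝ)-3 := rb2_val hk
  have hrb1 : roomYBottom k 1 = 2*(k:ℝ) := rb_one hk
  have hstrip : ∀ j : ℕ, ∃ g : Plane, 1 ≤ j → j ≤ k → g ∈ G ∧
      (1+((j:ℝ)-1)*(2*(k:ℝ)+2) ≤ px g ∧ px g ≤ 2+((j:ℝ)-1)*(2*(k:ℝ)+2)) := by
    intro j
    by_cases hj : 1 ≤ j ∧ j ≤ k
    · have hqS : pt (1+((j:ℝ)-1)*(2*(k:ℝ)+2) + 1/2) (2*(k:ℝ)-1) ∈ PkRegion k := by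
        apply corridor_sub hk (i := 1) (j := j) le_rfl (by omega) hj.1 hj.2
        · simp only [px_pt]; linarith
        · simp only [px_pt]; linarith
        · simp only [py_pt]
          show roomYBottom k (1+1) + 1 ≤ _
          rw [hrb2]; linarith
        · simp only [py_pt]; rw [hrb1]; linarith
      obtain ⟨g, hgG, hsee⟩ := hGS.2 _ hqS
      exact ⟨g, fun _ _ => ⟨hgG, see_gap_strip hk hj.1 hj.2 hsee⟩⟩
    · exact ⟨pt 0 0, fun h1 h2 => absurd ⟨h1, h2⟩ hj⟩
  choose f hf using hstrip
  have hroom : ∀ i : ℕ, ∃ g : Plane, 2 ≤ i → i ≤ k-1 → g ∈ G ∧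
      (roomYBottom k i ≤ py g ∧ py g ≤ roomYBottom k i + 1) := by
    intro i
    by_cases hi : 2 ≤ i ∧ i ≤ k-1
    · have hqS : pt (2*(k:ℝ)^2+4*(k:ℝ)+1) (roomYBottom k i + 1/2) ∈ PkRegion k := by
        apply room_sub hk (i := i) (by omega) (by omega)
        · simp only [px_pt]; nlinarith
        · simp only [px_pt]; exact le_rfl
        · simp only [py_pt]; linarith
        · simp only [py_pt]; linarith
      obtain ⟨g, hgG, hsee⟩ := hGS.2 _ hqS
      exact ⟨g, fun _ _ => ⟨hgG, see_room_level hk (by omega) (by omega) hsee⟩⟩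
    · exact ⟨pt 0 0, fun h1 h2 => absurd ⟨h1, h2⟩ hi⟩
  choose h hh using hroom
  have hfy : ∀ j, 1 ≤ j → j ≤ k → ¬(3 ≤ py (f j) ∧ py (f j) ≤ 2*(k:ℝ)-2) := by
    rintro j hj1 hjk ⟨hy1, hy2⟩
    obtain ⟨hfG, hfx⟩ := hf j hj1 hjk
    obtain ⟨i, hi, i', hi', hmem1, hmem2⟩ := vertex_strip_mid hk hj1 hjk (hGS.1 _ hfG)
      hfx.1 hfx.2 hy1 hy2
    exact part1 hk G hGS ⟨f j, hfG, i, Finset.mem_Icc.2 hi, i', Finset.mem_Icc.2 hi',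
      j, Finset.mem_Icc.2 ⟨hj1, hjk⟩, hmem1, hmem2⟩ hD
  set F : ℕ → Plane := fun m => if m ≤ k then f m else h (m - k + 1) with hF
  have hcard : (Finset.Icc 1 (2*k-2)).card ≤ G.card := by
    apply Finset.card_le_card_of_injOn F
    · intro m hm
      rw [Finset.coe_Icc, Set.mem_Icc] at hm
      rw [hF]
      by_cases hmk : m ≤ k
      · simp only [if_pos hmk]
        exact (hf m (by omega) hmk).1
      · simp only [if_neg hmk]
        exact (hh (m-k+1) (by omega) (by omega)).1
    · intro m hm m' hm' heq
      rw [Finset.coe_Icc, Set.mem_Icc] at hm hm'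
      simp only [hF] at heq
      by_cases h1 : m ≤ k <;> by_cases h2 : m' ≤ k
      · rw [if_pos h1, if_pos h2] at heq
        obtain ⟨-, hb1, hb2⟩ := hf m (by omega) h1
        obtain ⟨-, hb1', hb2'⟩ := hf m' (by omega) h2
        rw [heq] at hb1 hb2
        exact col_close_eq hk (by omega) h1 (by omega) h2 hb1 hb2 hb1' hb2'
          (by rw [sub_self, abs_zero]; linarith)
      · exfalso
        rw [if_pos h1, if_neg h2] at heq
        obtain ⟨-, hb1, hb2⟩ := hh (m'-k+1) (by omega) (by omega)
        have hbd := rbmid_bounds hk (show 2 ≤ m'-k+1 by omega) (by omega)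
        refine hfy m (by omega) h1 ⟨?_, ?_⟩ <;> rw [heq] <;> linarith [hbd.1, hbd.2]
      · exfalso
        rw [if_neg h1, if_pos h2] at heq
        obtain ⟨-, hb1, hb2⟩ := hh (m-k+1) (by omega) (by omega)
        have hbd := rbmid_bounds hk (show 2 ≤ m-k+1 by omega) (by omega)
        refine hfy m' (by omega) h2 ⟨?_, ?_⟩ <;> rw [← heq] <;> linarith [hbd.1, hbd.2]
      · rw [if_neg h1, if_neg h2] at heq
        obtain ⟨-, hb1, hb2⟩ := hh (m-k+1) (by omega) (by omega)
        obtain ⟨-, hb1', hb2'⟩ := hh (m'-k+1) (by omega) (by omega)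
        rw [heq] at hb1 hb2
        have : m - k + 1 = m' - k + 1 := by
          by_contra hcon
          rcases Nat.lt_or_ge (m-k+1) (m'-k+1) with hlt | hge
          · have := rb_anti hk hlt (by omega)
            linarith
          · have hlt : m'-k+1 < m-k+1 := by omega
            have := rb_anti hk hlt (by omega)
            linarith
        omega
  rw [Nat.card_Icc] at hcard
  omega

end Part3

/-- For every integer `k ≥ 3`, no vertex guard set of `P_k` that
contains a guard at a vertex shared by a corridor and one of the rooms `R_2, …, R_{k-1}`
achieves a dispersion distance of `4k + 1`; consequently, every vertex guard set of
`P_k` attaining the maximum dispersion distance has cardinality at least `2k - 2`. -/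
theorem Pk_max_dispersion_card_ge (k : ℕ) (hk : 3 ≤ k) :
    (∀ G : Finset Plane, IsGuardSet (PkRegion k) G →
        (∃ g ∈ G, ∃ i ∈ Finset.Icc 2 (k - 1),
          ∃ i' ∈ Finset.Icc 1 (k - 1), ∃ j ∈ Finset.Icc 1 k,
            g ∈ (corridorPk k i' j).toSet ∧ g ∈ (roomRect k i).toSet) →
        ¬ DispersionAtLeast (PkRegion k) G ((4 * k + 1 : ℕ) : ℝ≥0∞)) ∧
    ∀ G : Finset Plane, AttainsMaxDispersion (PkRegion k) G → 2 * k - 2 ≤ G.card := by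
  exact ⟨part1 hk, part2 hk⟩

end DispersiveAGP
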